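/- arXiv:2109.00948 — 8 statements merged into one kernel-verified Lean document; each statement's English description precedes it below -/
import Mathlib

section
/- For every real a > 1/2, the kernel G_a is continuous on ℝ and bounded, with G_a(x) ≤ G_a(0) for all x ∈ ℝ and G_a(0) = Γ(a − 1/2) / (2√π · Γ(a)). -/
open MeasureTheory

noncomputable def Gkernel (a : ℝ) (x : ℝ) : ℝ :=
  (1 / Real.Gamma a) * ∫ s in Set.Ioi (0 : ℝ),
    s ^ (a - 1) * Real.exp (-s) * (4 * Real.pi * s) ^ (-(1 / 2) : ℝ) *
      Real.exp (-x ^ 2 / (4 * s))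

/-- For every `a > 1/2`, the kernel `G_a` is continuous and bounded, attains its
maximum at `0`, and `G_a(0) = Γ(a - 1/2) / (2√π · Γ(a))`. -/
theorem Gkernel_continuous_bounded (a : ℝ) (ha : 1 / 2 < a) :
    Continuous (Gkernel a) ∧
    (∀ x : ℝ, Gkernel a x ≤ Gkernel a 0) ∧
    Gkernel a 0 = Real.Gamma (a - 1 / 2) / (2 * Real.sqrt Real.pi * Real.Gamma a) := by
  have ha0 : (0:ℝ) < a := by linarith [Real.pi_pos]
  have ha' : (0:ℝ) < a - 1/2 := by linarith
  have hπ : (0:ℝ) < 4 * Real.pi := by positivity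
  set c : ℝ := (4 * Real.pi) ^ (-(1/2):ℝ) with hc
  set F : ℝ → ℝ → ℝ := fun x s =>
    s ^ (a - 1) * Real.exp (-s) * (4 * Real.pi * s) ^ (-(1 / 2) : ℝ) *
      Real.exp (-x ^ 2 / (4 * s)) with hF
  set bound : ℝ → ℝ := fun s => c * (Real.exp (-s) * s ^ (a - 1/2 - 1)) with hbd
  -- the key pointwise identity on Ioi 0
  have hg : ∀ s ∈ Set.Ioi (0:ℝ),
      s ^ (a - 1) * Real.exp (-s) * (4 * Real.pi * s) ^ (-(1 / 2) : ℝ) = bound s := by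
    intro s hs
    have hs0 : (0:ℝ) < s := hs
    have h1 : s ^ (a-1) * s ^ (-(1/2):ℝ) = s ^ (a - 1/2 - 1) := by
      rw [← Real.rpow_add hs0]; ring_nf
    rw [Real.mul_rpow hπ.le hs0.le, hbd, hc]
    rw [show s ^ (a - 1) * Real.exp (-s) * ((4*Real.pi) ^ (-(1/2):ℝ) * s ^ (-(1/2):ℝ))
        = (4*Real.pi) ^ (-(1/2):ℝ) * (Real.exp (-s) * (s ^ (a-1) * s ^ (-(1/2):ℝ))) by ring, h1]
  have h_int : IntegrableOn bound (Set.Ioi 0) :=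
    (Real.GammaIntegral_convergent ha').const_mul c
  -- F 0 = integrand without the exponential factor
  have hF0 : ∀ s, F 0 s = s ^ (a - 1) * Real.exp (-s) * (4 * Real.pi * s) ^ (-(1 / 2) : ℝ) := by
    intro s; simp [hF]
  have h_intF0 : IntegrableOn (F 0) (Set.Ioi 0) := by
    apply (h_int.congr_fun _ measurableSet_Ioi)
    intro s hs; rw [hF0 s, hg s hs]
  have hcont : ∀ x, ContinuousOn (F x) (Set.Ioi 0) := by
    intro x
    apply ContinuousOn.mul
    apply ContinuousOn.mul
    apply ContinuousOn.mul
    · exact continuousOn_id.rpow_const (fun s hs => Or.inl (ne_of_gt hs))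
    · exact (Real.continuous_exp.comp continuous_neg).continuousOn
    · apply ContinuousOn.rpow_const ((continuous_const.mul continuous_id).continuousOn)
      intro s hs
      exact Or.inl (mul_pos hπ hs).ne'
    · apply Real.continuous_exp.comp_continuousOn
      apply ContinuousOn.div continuousOn_const ((continuous_const.mul continuous_id).continuousOn)
      intro s hs
      exact (mul_pos (by norm_num : (0:ℝ) < 4) hs).ne'
  have hmeas : ∀ x, AEStronglyMeasurable (F x) (volume.restrict (Set.Ioi 0)) := fun x =>
    (hcont x).aestronglyMeasurable measurableSet_Ioi
  have hFnn : ∀ x, ∀ s ∈ Set.Ioi (0:ℝ), 0 ≤ F x s := by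
    intro x s hs
    have hs0 : (0:ℝ) < s := hs
    have h4s : (0:ℝ) ≤ 4 * Real.pi * s := by
      apply mul_nonneg (by positivity) hs0.le
    exact mul_nonneg (mul_nonneg (mul_nonneg (Real.rpow_nonneg hs0.le _) (Real.exp_pos _).le)
      (Real.rpow_nonneg h4s _)) (Real.exp_pos _).le
  have hFle : ∀ x, ∀ s ∈ Set.Ioi (0:ℝ), F x s ≤ bound s := by
    intro x s hs
    have hs0 : (0:ℝ) < s := hs
    rw [← hg s hs]
    have hexp : Real.exp (-x ^ 2 / (4 * s)) ≤ 1 := by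
      rw [Real.exp_le_one_iff]
      exact div_nonpos_of_nonpos_of_nonneg (neg_nonpos.mpr (sq_nonneg x)) (mul_pos (by norm_num : (0:ℝ) < 4) hs0).le
    calc F x s ≤ (s ^ (a - 1) * Real.exp (-s) * (4 * Real.pi * s) ^ (-(1 / 2) : ℝ)) * 1 := by
          apply mul_le_mul_of_nonneg_left hexp
          exact mul_nonneg (mul_nonneg (Real.rpow_nonneg hs0.le _) (Real.exp_pos _).le)
            (Real.rpow_nonneg (mul_nonneg (by positivity) hs0.le) _)
      _ = _ := by ring
  have h_bound : ∀ x, ∀ᵐ s ∂(volume.restrict (Set.Ioi (0:ℝ))), ‖F x s‖ ≤ bound s := by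
    intro x
    filter_upwards [ae_restrict_mem measurableSet_Ioi] with s hs
    rw [Real.norm_eq_abs, abs_of_nonneg (hFnn x s hs)]
    exact hFle x s hs
  have h_intF : ∀ x, IntegrableOn (F x) (Set.Ioi 0) := fun x =>
    Integrable.mono' h_int (hmeas x) (h_bound x)
  refine ⟨?_, ?_, ?_⟩
  · -- continuity
    have : Continuous (fun x => ∫ s in Set.Ioi (0:ℝ), F x s) := by
      apply continuous_of_dominated hmeas h_bound h_int
      filter_upwards [ae_restrict_mem measurableSet_Ioi] with s hs
      have hs0 : (0:ℝ) < s := hs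
      apply Continuous.mul continuous_const
      exact Real.continuous_exp.comp ((continuous_pow 2).neg.div_const _)
    exact continuous_const.mul this
  · -- boundedness
    intro x
    unfold Gkernel
    have hΓpos : 0 < Real.Gamma a := Real.Gamma_pos_of_pos ha0
    apply mul_le_mul_of_nonneg_left _ (div_nonneg zero_le_one hΓpos.le)
    apply setIntegral_mono_on (h_intF x) (h_intF 0) measurableSet_Ioi
    intro s hs
    show F x s ≤ F 0 s
    calc F x s ≤ bound s := hFle x s hs
      _ = F 0 s := by rw [← hg s hs, hF0 s]
  · -- value at 0
    unfold Gkernel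
    have : (∫ s in Set.Ioi (0:ℝ), F 0 s) = c * Real.Gamma (a - 1/2) := by
      rw [setIntegral_congr_fun measurableSet_Ioi (fun s hs => by rw [hF0 s, hg s hs])]
      rw [integral_const_mul, Real.Gamma_eq_integral ha']
    rw [show (∫ s in Set.Ioi (0:ℝ),
        s ^ (a - 1) * Real.exp (-s) * (4 * Real.pi * s) ^ (-(1 / 2) : ℝ) *
          Real.exp (-(0:ℝ) ^ 2 / (4 * s))) = ∫ s in Set.Ioi (0:ℝ), F 0 s from rfl, this]
    have h4 : Real.sqrt 4 = 2 := by
      rw [show (4:ℝ) = 2^2 by norm_num, Real.sqrt_sq (by norm_num : (0:ℝ) ≤ 2)]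
    have hcval : c = 1 / (2 * Real.sqrt Real.pi) := by
      rw [hc, Real.rpow_neg hπ.le, ← Real.sqrt_eq_rpow, Real.sqrt_mul (by norm_num : (0:ℝ) ≤ 4),
        h4, inv_eq_one_div]
    rw [hcval]
    have hΓ : Real.Gamma a ≠ 0 := (Real.Gamma_pos_of_pos ha0).ne'
    have hs : Real.sqrt Real.pi ≠ 0 := by positivity
    field_simp
end

section
/- For every real a > 1, the kernel G_a is differentiable at every point of ℝ and its derivative is uniformly bounded: |G_a′(x)| ≤ Γ(a − 1) / (2√(2πe) · Γ(a)) for all x ∈ ℝ. -/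
open MeasureTheory Real Set

lemma aux_mul_exp (u : ℝ) :
    u * Real.exp (-u ^ 2) ≤ Real.exp (-(1/2 : ℝ)) / Real.sqrt 2 := by
  rw [le_div_iff₀ (by positivity : (0:ℝ) < Real.sqrt 2)]
  have h3 : (Real.sqrt 2) ^ 2 = 2 := Real.sq_sqrt (by norm_num)
  have h1 : Real.sqrt 2 * u ≤ Real.exp (u ^ 2 - 1/2) := by
    have h2 := Real.add_one_le_exp (u ^ 2 - 1/2)
    nlinarith [sq_nonneg (Real.sqrt 2 * u - 1)]
  have h4 : Real.exp (u ^ 2 - 1/2) * Real.exp (-u ^ 2) = Real.exp (-(1/2:ℝ)) := by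
    rw [← Real.exp_add]; ring_nf
  calc u * Real.exp (-u ^ 2) * Real.sqrt 2
      = (Real.sqrt 2 * u) * Real.exp (-u ^ 2) := by ring
    _ ≤ Real.exp (u ^ 2 - 1/2) * Real.exp (-u ^ 2) :=
        mul_le_mul_of_nonneg_right h1 (Real.exp_nonneg _)
    _ = Real.exp (-(1/2:ℝ)) := h4

noncomputable def Gf (a : ℝ) (s : ℝ) : ℝ :=
  s ^ (a - 1) * Real.exp (-s) * (4 * Real.pi * s) ^ (-(1 / 2) : ℝ)

noncomputable def GC : ℝ := Real.exp (-(1/2:ℝ)) / Real.sqrt 2 * (4 * Real.pi) ^ (-(1/2) : ℝ)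

noncomputable def Gbnd (a : ℝ) (s : ℝ) : ℝ := GC * (Real.exp (-s) * s ^ (a - 2))

lemma Gf_contOn (a : ℝ) : ContinuousOn (Gf a) (Ioi 0) := by
  unfold Gf
  have h1 : ContinuousOn (fun s : ℝ => s ^ (a - 1)) (Ioi 0) :=
    ContinuousOn.rpow_const continuousOn_id (fun x hx => Or.inl (ne_of_gt hx))
  have h2 : ContinuousOn (fun s : ℝ => (4 * Real.pi * s) ^ (-(1/2) : ℝ)) (Ioi 0) :=
    ContinuousOn.rpow_const (by fun_prop)
      (fun x hx => Or.inl (by have hx' : (0:ℝ) < x := hx; positivity))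
  exact (h1.mul (Real.continuous_exp.comp continuous_neg).continuousOn).mul h2

lemma exp_contOn (x : ℝ) :
    ContinuousOn (fun s : ℝ => Real.exp (-x ^ 2 / (4 * s))) (Ioi 0) := by
  apply ContinuousOn.rexp
  apply ContinuousOn.div continuousOn_const (by fun_prop)
  intro s hs
  have hs' : (0:ℝ) < s := hs
  positivity

lemma GF_meas (a x : ℝ) : AEStronglyMeasurable
    (fun s => Gf a s * Real.exp (-x ^ 2 / (4 * s))) (volume.restrict (Ioi 0)) :=
  ((Gf_contOn a).mul (exp_contOn x)).aestronglyMeasurable measurableSet_Ioi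

lemma GF'_meas (a x : ℝ) : AEStronglyMeasurable
    (fun s => Gf a s * (Real.exp (-x ^ 2 / (4 * s)) * (-(2 * x) / (4 * s))))
    (volume.restrict (Ioi 0)) := by
  refine ((Gf_contOn a).mul ((exp_contOn x).mul ?_)).aestronglyMeasurable measurableSet_Ioi
  apply ContinuousOn.div continuousOn_const (by fun_prop)
  intro s hs
  have hs' : (0:ℝ) < s := hs
  positivity

lemma Gbnd_bound (a : ℝ) {s : ℝ} (hs : 0 < s) (x : ℝ) :
    ‖Gf a s * (Real.exp (-x ^ 2 / (4 * s)) * (-(2 * x) / (4 * s)))‖ ≤ Gbnd a s := by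
  have hss : (0:ℝ) < Real.sqrt s := Real.sqrt_pos.mpr hs
  have hsq : Real.sqrt s * Real.sqrt s = s := Real.mul_self_sqrt hs.le
  set u : ℝ := |x| / (2 * Real.sqrt s) with hu
  have hu2 : -x ^ 2 / (4 * s) = -u ^ 2 := by
    rw [hu]; rw [div_pow, mul_pow, sq_abs, Real.sq_sqrt hs.le]; ring_nf
  have hux : |(-(2 * x) / (4 * s))| = u / Real.sqrt s := by
    rw [abs_div, abs_neg, abs_mul, abs_mul, hu]
    rw [abs_of_pos (by positivity : (0:ℝ) < 4), abs_of_pos hs,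
      abs_of_pos (by norm_num : (0:ℝ) < 2)]
    rw [div_div, div_eq_div_iff (by positivity) (by positivity)]
    linear_combination (4 * |x|) * hsq
  have hGf : 0 ≤ Gf a s := by unfold Gf; positivity
  have key : u / Real.sqrt s * Real.exp (-u ^ 2)
      ≤ Real.exp (-(1/2:ℝ)) / Real.sqrt 2 / Real.sqrt s := by
    rw [div_mul_eq_mul_div, div_le_div_iff_of_pos_right hss]
    exact aux_mul_exp u
  have h1 : ‖Gf a s * (Real.exp (-x ^ 2 / (4 * s)) * (-(2 * x) / (4 * s)))‖
      ≤ Gf a s * (Real.exp (-(1/2:ℝ)) / Real.sqrt 2 / Real.sqrt s) := by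
    rw [norm_mul, norm_mul, Real.norm_eq_abs, Real.norm_eq_abs, Real.norm_eq_abs,
      abs_of_nonneg hGf, abs_of_pos (Real.exp_pos _), hux, hu2]
    refine mul_le_mul_of_nonneg_left ?_ hGf
    calc Real.exp (-u ^ 2) * (u / Real.sqrt s)
        = u / Real.sqrt s * Real.exp (-u ^ 2) := by ring
      _ ≤ _ := key
  refine h1.trans (le_of_eq ?_)
  unfold Gf Gbnd GC
  rw [Real.mul_rpow (by positivity) hs.le]
  rw [Real.rpow_neg hs.le, ← Real.sqrt_eq_rpow]
  rw [show a - 2 = (a - 1) + (-1 : ℝ) by ring, Real.rpow_add hs, Real.rpow_neg_one]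
  field_simp
  ring_nf
  rw [Real.sq_sqrt hs.le]

lemma Gbnd_integrable (a : ℝ) (ha : 1 < a) : IntegrableOn (Gbnd a) (Ioi 0) := by
  have h := Real.GammaIntegral_convergent (s := a - 1) (by linarith)
  have h2 : IntegrableOn (fun s : ℝ => Real.exp (-s) * s ^ (a - 2)) (Ioi 0) := by
    simpa [show a - 1 - 1 = a - 2 by ring] using h
  exact h2.const_mul GC

lemma Gf_integrable (a : ℝ) (ha : 1 < a) : IntegrableOn (Gf a) (Ioi 0) := by
  have h := Real.GammaIntegral_convergent (s := a - 1/2) (by linarith)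
  have h2 : IntegrableOn (fun s : ℝ =>
      (4 * Real.pi) ^ (-(1/2):ℝ) * (Real.exp (-s) * s ^ (a - 1/2 - 1))) (Ioi 0) :=
    h.const_mul _
  refine h2.congr_fun (fun s hs => ?_) measurableSet_Ioi
  have hs' : (0:ℝ) < s := hs
  have e1 : s ^ (a - 1/2 - 1) * s ^ ((1:ℝ)/2) * s ^ (-(1/2):ℝ) = s ^ (a - 1/2 - 1) := by
    rw [← Real.rpow_add hs', ← Real.rpow_add hs']; norm_num
  unfold Gf
  rw [Real.mul_rpow (by positivity) hs'.le]
  rw [show a - 1 = (a - 1/2 - 1) + (1/2 : ℝ) by ring, Real.rpow_add hs']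
  linear_combination (-((4*Real.pi) ^ (-(1/2):ℝ) * Real.exp (-s))) * e1

lemma GF_integrable (a : ℝ) (ha : 1 < a) (x : ℝ) :
    Integrable (fun s => Gf a s * Real.exp (-x ^ 2 / (4 * s)))
      (volume.restrict (Ioi 0)) := by
  refine Integrable.mono (Gf_integrable a ha) (GF_meas a x) ?_
  refine (ae_restrict_iff' measurableSet_Ioi).mpr (ae_of_all _ (fun s hs => ?_))
  have hs' : (0:ℝ) < s := hs
  have hGf : 0 ≤ Gf a s := by unfold Gf; positivity
  rw [norm_mul, Real.norm_eq_abs, Real.norm_eq_abs,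
    abs_of_nonneg hGf, abs_of_pos (Real.exp_pos _)]
  have : Real.exp (-x ^ 2 / (4 * s)) ≤ 1 := by
    rw [Real.exp_le_one_iff, neg_div]
    exact neg_nonpos.mpr (by positivity)
  nlinarith

set_option maxHeartbeats 1000000 in
lemma G_hasDeriv (a : ℝ) (ha : 1 < a) (x₀ : ℝ) :
    Integrable (fun s => Gf a s * (Real.exp (-x₀ ^ 2 / (4 * s)) * (-(2 * x₀) / (4 * s))))
      (volume.restrict (Ioi 0)) ∧
    HasDerivAt (fun x => ∫ s in Ioi (0:ℝ), Gf a s * Real.exp (-x ^ 2 / (4 * s)))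
      (∫ s in Ioi (0:ℝ), Gf a s * (Real.exp (-x₀ ^ 2 / (4 * s)) * (-(2 * x₀) / (4 * s)))) x₀ := by
  have hmeas : ∀ᶠ x in nhds x₀, AEStronglyMeasurable
      (fun s => Gf a s * Real.exp (-x ^ 2 / (4 * s))) (volume.restrict (Ioi 0)) :=
    Filter.Eventually.of_forall (fun x => GF_meas a x)
  have hbound : ∀ᵐ s ∂(volume.restrict (Ioi (0:ℝ))), ∀ x ∈ Metric.ball x₀ 1,
      ‖Gf a s * (Real.exp (-x ^ 2 / (4 * s)) * (-(2 * x) / (4 * s)))‖ ≤ Gbnd a s := by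
    refine (ae_restrict_iff' measurableSet_Ioi).mpr (ae_of_all _ (fun s hs => ?_))
    exact fun x _ => Gbnd_bound a hs x
  have hdiff : ∀ᵐ s ∂(volume.restrict (Ioi (0:ℝ))), ∀ x ∈ Metric.ball x₀ 1,
      HasDerivAt (fun x => Gf a s * Real.exp (-x ^ 2 / (4 * s)))
        (Gf a s * (Real.exp (-x ^ 2 / (4 * s)) * (-(2 * x) / (4 * s)))) x := by
    refine (ae_restrict_iff' measurableSet_Ioi).mpr (ae_of_all _ (fun s hs => ?_))
    intro x _
    have h := (((hasDerivAt_pow 2 x).neg.div_const (4 * s)).exp).const_mul (Gf a s)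
    simpa using h
  exact hasDerivAt_integral_of_dominated_loc_of_deriv_le
    (F := fun x s => Gf a s * Real.exp (-x ^ 2 / (4 * s)))
    (F' := fun x s => Gf a s * (Real.exp (-x ^ 2 / (4 * s)) * (-(2 * x) / (4 * s))))
    (Metric.ball_mem_nhds x₀ one_pos) hmeas (GF_integrable a ha x₀) (GF'_meas a x₀) hbound (Gbnd_integrable a ha) hdiff

/-- For every `a > 1`, the kernel `G_a` is differentiable everywhere and its
derivative is uniformly bounded by `Γ(a - 1) / (2√(2πe) · Γ(a))`. -/
theorem Gkernel_differentiable_deriv_bounded (a : ℝ) (ha : 1 < a) :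
    (∀ x : ℝ, DifferentiableAt ℝ (Gkernel a) x) ∧
    (∀ x : ℝ, |deriv (Gkernel a) x|
      ≤ Real.Gamma (a - 1) / (2 * Real.sqrt (2 * Real.pi * Real.exp 1) * Real.Gamma a)) := by
  have hΓ : 0 < Real.Gamma a := Real.Gamma_pos_of_pos (by linarith)
  have hGk : Gkernel a = fun x =>
      (1 / Real.Gamma a) * ∫ s in Ioi (0:ℝ), Gf a s * Real.exp (-x ^ 2 / (4 * s)) := rfl
  have hD : ∀ x₀ : ℝ, HasDerivAt (Gkernel a)
      ((1 / Real.Gamma a) *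
        ∫ s in Ioi (0:ℝ), Gf a s * (Real.exp (-x₀ ^ 2 / (4 * s)) * (-(2 * x₀) / (4 * s)))) x₀ := by
    intro x₀
    rw [hGk]
    exact ((G_hasDeriv a ha x₀).2).const_mul _
  refine ⟨fun x => (hD x).differentiableAt, fun x => ?_⟩
  rw [(hD x).deriv]
  have hb : ‖∫ s in Ioi (0:ℝ), Gf a s * (Real.exp (-x ^ 2 / (4 * s)) * (-(2 * x) / (4 * s)))‖
      ≤ ∫ s in Ioi (0:ℝ), Gbnd a s := by
    apply norm_integral_le_of_norm_le (Gbnd_integrable a ha)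
    exact (ae_restrict_iff' measurableSet_Ioi).mpr (ae_of_all _ (fun s hs => Gbnd_bound a hs x))
  have hint : ∫ s in Ioi (0:ℝ), Gbnd a s = GC * Real.Gamma (a - 1) := by
    unfold Gbnd
    rw [MeasureTheory.integral_const_mul]
    rw [Real.Gamma_eq_integral (by linarith : (0:ℝ) < a - 1)]
    simp only [show a - 1 - 1 = a - 2 by ring]
  have hGC : GC = 1 / (2 * Real.sqrt (2 * Real.pi * Real.exp 1)) := by
    unfold GC
    rw [Real.rpow_neg (by positivity), ← Real.sqrt_eq_rpow]
    rw [Real.exp_neg]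
    have he : Real.exp (1/2 : ℝ) = Real.sqrt (Real.exp 1) := Real.exp_half 1
    rw [he]
    have h4 : Real.sqrt (4 * Real.pi) = 2 * Real.sqrt Real.pi := by
      rw [Real.sqrt_mul (by norm_num), show Real.sqrt 4 = 2 by
        rw [show (4:ℝ) = 2 ^ 2 by norm_num, Real.sqrt_sq (by norm_num)]]
    have h2pe : Real.sqrt (2 * Real.pi * Real.exp 1)
        = Real.sqrt 2 * Real.sqrt Real.pi * Real.sqrt (Real.exp 1) := by
      rw [Real.sqrt_mul (by positivity), Real.sqrt_mul (by norm_num)]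
    rw [h4, h2pe]
    have n1 : Real.sqrt 2 ≠ 0 := by positivity
    have n2 : Real.sqrt Real.pi ≠ 0 := by positivity
    have n3 : Real.sqrt (Real.exp 1) ≠ 0 := by positivity
    field_simp
  have hΓ1 : 0 < Real.Gamma (a - 1) := Real.Gamma_pos_of_pos (by linarith)
  calc |(1 / Real.Gamma a) *
        ∫ s in Ioi (0:ℝ), Gf a s * (Real.exp (-x ^ 2 / (4 * s)) * (-(2 * x) / (4 * s)))|
      = (1 / Real.Gamma a) *
        |∫ s in Ioi (0:ℝ), Gf a s * (Real.exp (-x ^ 2 / (4 * s)) * (-(2 * x) / (4 * s)))| := by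
        rw [abs_mul, abs_of_pos (by positivity)]
    _ ≤ (1 / Real.Gamma a) * (GC * Real.Gamma (a - 1)) := by
        refine mul_le_mul_of_nonneg_left ?_ (by positivity)
        rw [← hint]
        exact (Real.norm_eq_abs _ ▸ hb)
    _ = Real.Gamma (a - 1) / (2 * Real.sqrt (2 * Real.pi * Real.exp 1) * Real.Gamma a) := by
        rw [hGC]
        have ne1 : Real.sqrt (2 * Real.pi * Real.exp 1) ≠ 0 := by positivity
        field_simp
end

section
/- Let a > 1 and let m ∈ L¹(ℝ). Then u = G_a * m is differentiable at every point of ℝ, its derivative is u′ = G_a′ * m, and ‖u′‖_{L^∞} ≤ C_a ‖m‖_{L¹} where C_a = Γ(a − 1) / (2√(2πe) · Γ(a)). (This is the estimate ‖u_x‖_{L^∞} ≤ C ‖m‖_{L¹} used to prove global existence.) -/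
open MeasureTheory

namespace GkernelAux

open Set Real Filter

/-- The `x`-independent coefficient in the subordination integrand. -/
noncomputable def coefF (a s : ℝ) : ℝ :=
  s ^ (a - 1) * Real.exp (-s) * (4 * Real.pi * s) ^ (-(1 / 2) : ℝ)

/-- The pointwise `x`-derivative of the subordination integrand. -/
noncomputable def Fprime (a x s : ℝ) : ℝ :=
  coefF a s * (Real.exp (-x ^ 2 / (4 * s)) * (-(2 * x) / (4 * s)))

/-- Candidate derivative of `Gkernel a`. -/
noncomputable def Gd (a x : ℝ) : ℝ :=
  (1 / Real.Gamma a) * ∫ s in Set.Ioi (0 : ℝ), Fprime a x s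

lemma mul_exp_neg_sq_le (t : ℝ) (ht : 0 ≤ t) :
    t * Real.exp (-t^2) ≤ (Real.sqrt (2*Real.exp 1))⁻¹ := by
  rw [← Real.sqrt_inv]
  rw [show t * Real.exp (-t^2) = Real.sqrt ((t*Real.exp (-t^2))^2) from
    (Real.sqrt_sq (by positivity)).symm]
  apply Real.sqrt_le_sqrt
  have key : (2*t^2) * Real.exp (-(2*t^2)) ≤ Real.exp (-1) := by
    have h := Real.add_one_le_exp (2*t^2 - 1)
    calc (2*t^2) * Real.exp (-(2*t^2)) ≤ Real.exp (2*t^2-1) * Real.exp (-(2*t^2)) := by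
          apply mul_le_mul_of_nonneg_right _ (Real.exp_nonneg _); linarith
      _ = Real.exp (-1) := by rw [← Real.exp_add]; ring_nf
  have hsq : (t*Real.exp (-t^2))^2 = (2*t^2) * Real.exp (-(2*t^2)) / 2 := by
    rw [mul_pow, sq (Real.exp _), ← Real.exp_add]; ring_nf
  have hinv : (2*Real.exp 1)⁻¹ = Real.exp (-1)/2 := by
    rw [mul_inv, Real.exp_neg]; ring
  rw [hsq, hinv]; linarith

lemma rpow_coef_eq (s : ℝ) (hs : 0 < s) :
    (4 * Real.pi * s) ^ (-(1 / 2) : ℝ) = (2*Real.sqrt Real.pi)⁻¹ * (Real.sqrt s)⁻¹ := by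
  have h4 : (0:ℝ) < 4 * Real.pi * s := by positivity
  rw [Real.rpow_neg h4.le, ← Real.sqrt_eq_rpow,
    show (4:ℝ)*Real.pi*s = 4*(Real.pi*s) by ring,
    Real.sqrt_mul (by norm_num : (0:ℝ) ≤ 4), Real.sqrt_mul Real.pi_pos.le,
    show Real.sqrt 4 = 2 by
      rw [show (4:ℝ) = 2^2 by norm_num, Real.sqrt_sq (by norm_num : (0:ℝ) ≤ 2)],
    ← mul_assoc, mul_inv]

lemma rpow_merge (s a : ℝ) (hs : 0 < s) :
    s ^ (a-1) * ((Real.sqrt s)⁻¹ * (Real.sqrt s)⁻¹) = s ^ (a-1-1) := by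
  rw [← mul_inv, Real.mul_self_sqrt hs.le, ← Real.rpow_neg_one s, ← Real.rpow_add hs]
  ring_nf

lemma rpow_merge2 (s a : ℝ) (hs : 0 < s) :
    s ^ (a-1) * (Real.sqrt s)⁻¹ = s ^ (a-1/2-1) := by
  rw [Real.sqrt_eq_rpow, ← Real.rpow_neg hs.le, ← Real.rpow_add hs]
  ring_nf

lemma sqrt_split : Real.sqrt (2*Real.pi*Real.exp 1)
    = Real.sqrt Real.pi * Real.sqrt (2*Real.exp 1) := by
  rw [show 2*Real.pi*Real.exp 1 = Real.pi * (2*Real.exp 1) by ring,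
    Real.sqrt_mul Real.pi_pos.le]

lemma coefF_nonneg (a s : ℝ) (hs : 0 < s) : 0 ≤ coefF a s := by
  unfold coefF; positivity

lemma coefF_eq (a s : ℝ) (hs : 0 < s) :
    coefF a s = Real.exp (-s) * (s ^ (a-1) * ((2*Real.sqrt Real.pi)⁻¹ * (Real.sqrt s)⁻¹)) := by
  unfold coefF; rw [rpow_coef_eq s hs]; ring

lemma coefF_eq2 (a s : ℝ) (hs : 0 < s) :
    coefF a s = Real.exp (-s) * s ^ (a-1/2-1) * (2*Real.sqrt Real.pi)⁻¹ := by
  rw [coefF_eq a s hs, ← rpow_merge2 s a hs]; ring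

/-- Key pointwise bound on the derivative of the integrand. -/
lemma Fprime_abs_le (a x s : ℝ) (hs : 0 < s) :
    |Fprime a x s| ≤ Real.exp (-s) * s ^ (a-1-1) *
      (2 * Real.sqrt (2*Real.pi*Real.exp 1))⁻¹ := by
  have hsqs : (0:ℝ) < Real.sqrt s := Real.sqrt_pos.2 hs
  set t : ℝ := |x| / (2 * Real.sqrt s) with ht_def
  have ht0 : 0 ≤ t := by positivity
  have ht2 : t^2 = x^2/(4*s) := by
    rw [ht_def, div_pow, sq_abs, mul_pow, Real.sq_sqrt hs.le]; norm_num
  have harg : -x^2/(4*s) = -t^2 := by rw [ht2]; ring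
  have habs : |Real.exp (-x ^ 2 / (4 * s)) * (-(2 * x) / (4 * s))|
      = Real.exp (-t^2) * (t / Real.sqrt s) := by
    rw [abs_mul, abs_of_nonneg (Real.exp_nonneg _), harg]
    congr 1
    rw [abs_div, abs_neg, abs_of_pos (show (0:ℝ)<4*s by positivity), abs_mul,
      abs_of_nonneg (show (0:ℝ)≤2 by norm_num), ht_def, div_div, mul_assoc,
      Real.mul_self_sqrt hs.le]
    ring
  calc |Fprime a x s|
      = coefF a s * (Real.exp (-t^2) * (t / Real.sqrt s)) := by
        rw [Fprime, abs_mul, abs_of_nonneg (coefF_nonneg a s hs), habs]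
    _ ≤ coefF a s * ((Real.sqrt (2*Real.exp 1))⁻¹ * (Real.sqrt s)⁻¹) := by
        apply mul_le_mul_of_nonneg_left _ (coefF_nonneg a s hs)
        have h1 : Real.exp (-t^2) * (t / Real.sqrt s)
            = (t * Real.exp (-t^2)) * (Real.sqrt s)⁻¹ := by ring
        rw [h1]
        exact mul_le_mul_of_nonneg_right (mul_exp_neg_sq_le t ht0) (by positivity)
    _ = Real.exp (-s) * s ^ (a-1-1) * (2 * Real.sqrt (2*Real.pi*Real.exp 1))⁻¹ := by
        rw [coefF_eq a s hs, sqrt_split, ← rpow_merge s a hs]; ring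

lemma hasDerivAt_exp_part (s x : ℝ) (hs : 0 < s) :
    HasDerivAt (fun x : ℝ => Real.exp (-x ^ 2 / (4 * s)))
      (Real.exp (-x ^ 2 / (4 * s)) * (-(2 * x) / (4 * s))) x := by
  have h1 : HasDerivAt (fun x : ℝ => -x ^ 2 / (4 * s)) (-(2 * x) / (4 * s)) x := by
    have h0 := ((hasDerivAt_pow 2 x).neg).div_const (4*s)
    norm_num at h0
    convert h0 using 1 <;> ring_nf
  simpa using h1.exp

lemma bound_integrable (a : ℝ) (ha : 1 < a) :
    Integrable (fun s => Real.exp (-s) * s ^ (a-1-1) *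
      (2 * Real.sqrt (2*Real.pi*Real.exp 1))⁻¹) (volume.restrict (Ioi (0:ℝ))) :=
  (Real.GammaIntegral_convergent (show (0:ℝ) < a-1 by linarith)).mul_const _

lemma bound2_integrable (a : ℝ) (ha : 1 < a) :
    Integrable (fun s => Real.exp (-s) * s ^ (a-1/2-1) *
      (2 * Real.sqrt Real.pi)⁻¹) (volume.restrict (Ioi (0:ℝ))) :=
  (Real.GammaIntegral_convergent (show (0:ℝ) < a-1/2 by linarith)).mul_const _

lemma F_meas (a x : ℝ) :
    AEStronglyMeasurable (fun s => coefF a s * Real.exp (-x ^ 2 / (4 * s)))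
      (volume.restrict (Ioi (0:ℝ))) := by
  apply Measurable.aestronglyMeasurable
  unfold coefF
  fun_prop

lemma Fprime_meas (a x : ℝ) :
    AEStronglyMeasurable (Fprime a x) (volume.restrict (Ioi (0:ℝ))) := by
  apply Measurable.aestronglyMeasurable
  unfold Fprime coefF
  fun_prop

lemma F_int (a : ℝ) (ha : 1 < a) (x : ℝ) :
    Integrable (fun s => coefF a s * Real.exp (-x ^ 2 / (4 * s)))
      (volume.restrict (Ioi (0:ℝ))) := by
  refine (bound2_integrable a ha).mono' (F_meas a x) ?_
  rw [ae_restrict_iff' measurableSet_Ioi]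
  refine Eventually.of_forall fun s hs => ?_
  have hs0 : (0:ℝ) < s := hs
  rw [Real.norm_eq_abs, abs_mul, abs_of_nonneg (coefF_nonneg a s hs),
    abs_of_nonneg (Real.exp_nonneg _)]
  have hle1 : Real.exp (-x ^ 2 / (4 * s)) ≤ 1 := by
    rw [Real.exp_le_one_iff, neg_div, neg_nonpos]
    positivity
  calc coefF a s * Real.exp (-x ^ 2 / (4 * s)) ≤ coefF a s * 1 :=
        mul_le_mul_of_nonneg_left hle1 (coefF_nonneg a s hs)
    _ = Real.exp (-s) * s ^ (a-1/2-1) * (2 * Real.sqrt Real.pi)⁻¹ := by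
        rw [mul_one, coefF_eq2 a s hs]

/-- `Gkernel a` has derivative `Gd a x` at every point. -/
lemma hasDerivAt_Gkernel (a : ℝ) (ha : 1 < a) (x : ℝ) :
    HasDerivAt (Gkernel a) (Gd a x) x := by
  have key := hasDerivAt_integral_of_dominated_loc_of_deriv_le
    (μ := volume.restrict (Ioi (0:ℝ)))
    (F := fun x s => coefF a s * Real.exp (-x ^ 2 / (4 * s)))
    (F' := Fprime a) (x₀ := x)
    (bound := fun s => Real.exp (-s) * s ^ (a-1-1) *
      (2 * Real.sqrt (2*Real.pi*Real.exp 1))⁻¹)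
    (Metric.ball_mem_nhds x one_pos) (Eventually.of_forall fun z => F_meas a z) (F_int a ha x)
    (Fprime_meas a x)
    (by
      rw [ae_restrict_iff' measurableSet_Ioi]
      refine Eventually.of_forall fun s hs => fun z _ => ?_
      simpa [Real.norm_eq_abs] using Fprime_abs_le a z s hs)
    (bound_integrable a ha)
    (by
      rw [ae_restrict_iff' measurableSet_Ioi]
      refine Eventually.of_forall fun s hs => fun z _ => ?_
      exact (hasDerivAt_exp_part s z hs).const_mul (coefF a s))
  exact (key.2).const_mul (1 / Real.Gamma a)

lemma Gd_abs_le (a : ℝ) (ha : 1 < a) (x : ℝ) :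
    |Gd a x| ≤ Real.Gamma (a-1) /
      (2 * Real.sqrt (2*Real.pi*Real.exp 1) * Real.Gamma a) := by
  have hΓ : 0 < Real.Gamma a := Real.Gamma_pos_of_pos (by linarith)
  have hs2 : 0 < Real.sqrt (2*Real.pi*Real.exp 1) := Real.sqrt_pos.2 (by positivity)
  have hb : ‖∫ s in Ioi (0:ℝ), Fprime a x s‖ ≤
      ∫ s in Ioi (0:ℝ), Real.exp (-s) * s ^ (a-1-1) *
        (2 * Real.sqrt (2*Real.pi*Real.exp 1))⁻¹ := by
    refine norm_integral_le_of_norm_le (bound_integrable a ha) ?_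
    rw [ae_restrict_iff' measurableSet_Ioi]
    exact Eventually.of_forall fun s hs => by
      simpa [Real.norm_eq_abs] using Fprime_abs_le a x s hs
  have hval : ∫ s in Ioi (0:ℝ), Real.exp (-s) * s ^ (a-1-1) *
      (2 * Real.sqrt (2*Real.pi*Real.exp 1))⁻¹
      = Real.Gamma (a-1) * (2 * Real.sqrt (2*Real.pi*Real.exp 1))⁻¹ := by
    rw [integral_mul_const, ← Real.Gamma_eq_integral (show (0:ℝ) < a-1 by linarith)]
  calc |Gd a x| = |1 / Real.Gamma a| * |∫ s in Ioi (0:ℝ), Fprime a x s| := by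
        rw [Gd, abs_mul]
    _ ≤ (1 / Real.Gamma a) * (Real.Gamma (a-1) * (2 * Real.sqrt (2*Real.pi*Real.exp 1))⁻¹) := by
        rw [abs_of_pos (by positivity : (0:ℝ) < 1 / Real.Gamma a)]
        apply mul_le_mul_of_nonneg_left _ (by positivity)
        rw [← hval]
        simpa [Real.norm_eq_abs] using hb
    _ = Real.Gamma (a-1) / (2 * Real.sqrt (2*Real.pi*Real.exp 1) * Real.Gamma a) := by
        simp only [div_eq_mul_inv, mul_inv, one_mul]
        ring
    
lemma Gkernel_abs_le (a : ℝ) (ha : 1 < a) (z : ℝ) :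
    |Gkernel a z| ≤ (1 / Real.Gamma a) *
      ∫ s in Ioi (0:ℝ), Real.exp (-s) * s ^ (a-1/2-1) * (2 * Real.sqrt Real.pi)⁻¹ := by
  have hΓ : 0 < Real.Gamma a := Real.Gamma_pos_of_pos (by linarith)
  have h1 : Gkernel a z = (1 / Real.Gamma a) *
      ∫ s in Ioi (0:ℝ), coefF a s * Real.exp (-z ^ 2 / (4 * s)) := rfl
  rw [h1, abs_mul, abs_of_pos (by positivity : (0:ℝ) < 1 / Real.Gamma a)]
  apply mul_le_mul_of_nonneg_left _ (by positivity)
  have := norm_integral_le_of_norm_le (μ := volume.restrict (Ioi (0:ℝ)))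
    (f := fun s => coefF a s * Real.exp (-z ^ 2 / (4 * s)))
    (bound2_integrable a ha) ?_
  · simpa [Real.norm_eq_abs] using this
  · rw [ae_restrict_iff' measurableSet_Ioi]
    refine Eventually.of_forall fun s hs => ?_
    have hs0 : (0:ℝ) < s := hs
    rw [Real.norm_eq_abs, abs_mul, abs_of_nonneg (coefF_nonneg a s hs),
      abs_of_nonneg (Real.exp_nonneg _)]
    have hle1 : Real.exp (-z ^ 2 / (4 * s)) ≤ 1 := by
      rw [Real.exp_le_one_iff, neg_div, neg_nonpos]
      positivity
    calc coefF a s * Real.exp (-z ^ 2 / (4 * s)) ≤ coefF a s * 1 :=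
          mul_le_mul_of_nonneg_left hle1 (coefF_nonneg a s hs)
      _ = Real.exp (-s) * s ^ (a-1/2-1) * (2 * Real.sqrt Real.pi)⁻¹ := by
          rw [mul_one, coefF_eq2 a s hs]

end GkernelAux

/-- For `a > 1` and `m ∈ L¹(ℝ)`, the function `u = G_a * m` is differentiable
everywhere with derivative `u' = G_a' * m`, and `‖u'‖_{L^∞} ≤ C_a ‖m‖_{L¹}` with
`C_a = Γ(a - 1) / (2√(2πe) · Γ(a))`. -/
theorem deriv_convolution_Gkernel_bound (a : ℝ) (ha : 1 < a)
    (m : ℝ → ℝ) (hm : Integrable m) :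
    (∀ x : ℝ, HasDerivAt (fun z => ∫ y, Gkernel a (z - y) * m y)
      (∫ y, deriv (Gkernel a) (x - y) * m y) x) ∧
    (∀ x : ℝ, |∫ y, deriv (Gkernel a) (x - y) * m y|
      ≤ (Real.Gamma (a - 1) / (2 * Real.sqrt (2 * Real.pi * Real.exp 1) * Real.Gamma a)) *
        ∫ y, |m y|) := by
  open GkernelAux Set Real Filter in
  set C : ℝ := Real.Gamma (a - 1) /
    (2 * Real.sqrt (2 * Real.pi * Real.exp 1) * Real.Gamma a) with hC
  have hC0 : 0 ≤ C := by
    have hΓ : 0 < Real.Gamma a := Real.Gamma_pos_of_pos (by linarith)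
    have hΓ' : 0 < Real.Gamma (a-1) := Real.Gamma_pos_of_pos (by linarith)
    positivity
  have hG : ∀ x : ℝ, HasDerivAt (Gkernel a) (Gd a x) x := hasDerivAt_Gkernel a ha
  have hderiv_eq : deriv (Gkernel a) = Gd a := funext fun x => (hG x).deriv
  have hGcont : Continuous (Gkernel a) :=
    continuous_iff_continuousAt.2 fun x => (hG x).continuousAt
  have hGdmeas : Measurable (Gd a) := by
    rw [← hderiv_eq]; exact measurable_deriv _
  -- the key convolution differentiation
  have key : ∀ x : ℝ, Integrable (fun y => Gd a (x - y) * m y) ∧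
      HasDerivAt (fun z => ∫ y, Gkernel a (z - y) * m y)
        (∫ y, Gd a (x - y) * m y) x := by
    intro x
    refine hasDerivAt_integral_of_dominated_loc_of_deriv_le
      (F := fun z y => Gkernel a (z - y) * m y)
      (F' := fun z y => Gd a (z - y) * m y) (x₀ := x)
      (bound := fun y => C * |m y|) (Metric.ball_mem_nhds x one_pos)
      (Eventually.of_forall fun z =>
        ((hGcont.comp (continuous_const.sub continuous_id)).aestronglyMeasurable.mul
          hm.aestronglyMeasurable))
      ?_ 
      (((hGdmeas.comp (measurable_const.sub measurable_id)).aestronglyMeasurable).mul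
        hm.aestronglyMeasurable)
      (Eventually.of_forall fun y => fun z _ => by
        rw [Real.norm_eq_abs, abs_mul]
        exact mul_le_mul_of_nonneg_right (Gd_abs_le a ha (z - y)) (abs_nonneg _))
      (hm.abs.const_mul C)
      (Eventually.of_forall fun y => fun z _ => by
        have h1 : HasDerivAt (fun z : ℝ => Gkernel a (z - y)) (Gd a (z - y)) z := by
          have := (hG (z - y)).comp z ((hasDerivAt_id z).sub_const y)
          exact (hG (z - y)).comp_sub_const z y
        exact h1.mul_const (m y))
    -- Integrable (fun y => Gkernel a (x - y) * m y)
    · refine (hm.abs.const_mul ((1 / Real.Gamma a) *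
        ∫ s in Ioi (0:ℝ), Real.exp (-s) * s ^ (a-1/2-1) * (2 * Real.sqrt Real.pi)⁻¹)).mono'
        ((hGcont.comp (continuous_const.sub continuous_id)).aestronglyMeasurable.mul
          hm.aestronglyMeasurable) ?_
      refine Eventually.of_forall fun y => ?_
      rw [Real.norm_eq_abs, abs_mul]
      exact mul_le_mul_of_nonneg_right (Gkernel_abs_le a ha (x - y)) (abs_nonneg _)
  constructor
  · intro x
    rw [hderiv_eq]
    exact (key x).2
  · intro x
    rw [hderiv_eq]
    have hb := norm_integral_le_of_norm_le (μ := (volume : Measure ℝ))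
      (f := fun y => Gd a (x - y) * m y) (hm.abs.const_mul C)
      (Eventually.of_forall fun y => by
        rw [Real.norm_eq_abs, abs_mul]
        exact mul_le_mul_of_nonneg_right (Gd_abs_le a ha (x - y)) (abs_nonneg _))
    rw [integral_const_mul] at hb
    simpa [Real.norm_eq_abs] using hb
end

section
/- Let G ∈ L¹(ℝ) be even (G(−x) = G(x) for all x), let m be a Schwartz function on ℝ, and set u = G * m. Then ∫_ℝ ( u(x) m′(x) + 2 u′(x) m(x) ) dx = 0. Consequently, for a solution of m_t + u m_x + 2 u_x m = 0 with u = G * m, the spatial integral of the right-hand side of ∂_t m = −(u m_x + 2 u_x m) vanishes. -/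
open MeasureTheory Filter Metric

private lemma bdd_mul_int {f g : ℝ → ℝ} (hf : Continuous f) {C : ℝ}
    (hC : ∀ x, ‖f x‖ ≤ C) (hg : Integrable g) :
    Integrable (fun x => f x * g x) :=
  hg.bdd_mul hf.aestronglyMeasurable (Eventually.of_forall hC)

/-- For an even integrable kernel `G` and a Schwartz function `m`, with
`u = G * m`, one has `∫ (u m' + 2 u' m) dx = 0`. Hence the spatial integral of the
right-hand side of `∂ₜ m = -(u m_x + 2 u_x m)` vanishes. -/
theorem integral_transport_rhs_eq_zero (G : ℝ → ℝ)
    (hG : Integrable G) (hGeven : ∀ x : ℝ, G (-x) = G x)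
    (m : SchwartzMap ℝ ℝ) :
    ∫ x : ℝ, ((∫ y : ℝ, G (x - y) * m y) * deriv (fun z => m z) x
      + 2 * deriv (fun z => ∫ y : ℝ, G (z - y) * m y) x * m x) = 0 := by
  classical
  -- notation
  set dm : ℝ → ℝ := deriv (⇑m) with hdm_def
  have hdm_eq : ⇑(SchwartzMap.derivCLM ℝ ℝ m) = dm := by
    funext x; simp [hdm_def, SchwartzMap.derivCLM_apply]
  have hdm_cont : Continuous dm := by
    rw [← hdm_eq]; exact (SchwartzMap.derivCLM ℝ ℝ m).continuous
  have hmInt : Integrable (⇑m) := m.integrable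
  have hdmInt : Integrable dm := by rw [← hdm_eq]; exact (SchwartzMap.derivCLM ℝ ℝ m).integrable
  obtain ⟨Cm, hCm⟩ : ∃ C, ∀ x, ‖m x‖ ≤ C :=
    ⟨SchwartzMap.seminorm ℝ 0 0 m, fun x => SchwartzMap.norm_le_seminorm ℝ m x⟩
  obtain ⟨Cd, hCd⟩ : ∃ C, ∀ x, ‖dm x‖ ≤ C := by
    refine ⟨SchwartzMap.seminorm ℝ 0 0 (SchwartzMap.derivCLM ℝ ℝ m), fun x => ?_⟩
    rw [← hdm_eq]; exact SchwartzMap.norm_le_seminorm ℝ _ x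
  have hmDiff : ∀ x, HasDerivAt (⇑m) (dm x) x := fun x =>
    (m.differentiable.differentiableAt).hasDerivAt
  -- derivative of translates
  have htransDiff : ∀ (t x : ℝ), HasDerivAt (fun z => m (z - t)) (dm (x - t)) x := by
    intro t x
    have h1 : HasDerivAt (fun z : ℝ => z - t) 1 x := (hasDerivAt_id x).sub_const t
    have h2 := (hmDiff (x - t)).comp x h1
    rw [mul_one] at h2
    exact h2
  -- rewrite the convolution
  have hu : ∀ x : ℝ, (∫ y : ℝ, G (x - y) * m y) = ∫ t : ℝ, G t * m (x - t) := by
    intro x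
    have h := integral_sub_left_eq_self (fun t => G t * m (x - t)) volume x
    simpa using h
  have hufun : (fun z => ∫ y : ℝ, G (z - y) * m y) = fun z => ∫ t : ℝ, G t * m (z - t) :=
    funext hu
  -- integrability of the basic products (in x, for fixed t)
  have p1 : ∀ t : ℝ, Integrable (fun x => m (x - t) * dm x) := fun t =>
    bdd_mul_int (m.continuous.comp (continuous_id.sub continuous_const))
      (fun x => hCm (x - t)) hdmInt
  have p2 : ∀ t : ℝ, Integrable (fun x => dm (x - t) * m x) := fun t =>
    bdd_mul_int (hdm_cont.comp (continuous_id.sub continuous_const))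
      (fun x => hCd (x - t)) hmInt
  have p3 : ∀ t : ℝ, Integrable (fun x => m (x - t) * m x) := fun t =>
    bdd_mul_int (m.continuous.comp (continuous_id.sub continuous_const))
      (fun x => hCm (x - t)) hmInt
  have p1' : ∀ t : ℝ, Integrable (fun x => m x * dm (x - t)) := fun t => by
    simpa [mul_comm] using p2 t
  -- integrability of t ↦ G t * (bounded continuous)
  have qInt : ∀ (f : ℝ → ℝ), Continuous f → ∀ (C : ℝ), (∀ x, ‖f x‖ ≤ C) →
      Integrable (fun t => G t * f t) := by
    intro f hf C hC
    have := bdd_mul_int hf hC hG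
    simpa [mul_comm] using this
  have qm : ∀ x : ℝ, Integrable (fun t => G t * m (x - t)) := fun x =>
    qInt _ (m.continuous.comp (continuous_const.sub continuous_id)) Cm
      (fun t => hCm (x - t))
  have qd : ∀ x : ℝ, Integrable (fun t => G t * dm (x - t)) := fun x =>
    qInt _ (hdm_cont.comp (continuous_const.sub continuous_id)) Cd
      (fun t => hCd (x - t))
  -- derivative of the convolution
  have hderivAt : ∀ x : ℝ, HasDerivAt (fun z => ∫ t : ℝ, G t * m (z - t))
      (∫ t : ℝ, G t * dm (x - t)) x := by
    intro x
    have key := hasDerivAt_integral_of_dominated_loc_of_deriv_le (μ := volume)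
      (F := fun z t => G t * m (z - t)) (F' := fun z t => G t * dm (z - t))
      (x₀ := x) (bound := fun t => ‖G t‖ * Cd) (s := Metric.ball x 1) (Metric.ball_mem_nhds x one_pos)
      (Eventually.of_forall fun z => hG.aestronglyMeasurable.mul
        ((m.continuous.comp (continuous_const.sub continuous_id)).aestronglyMeasurable))
      (qm x)
      (hG.aestronglyMeasurable.mul
        ((hdm_cont.comp (continuous_const.sub continuous_id)).aestronglyMeasurable))
      (Eventually.of_forall fun t => fun z _ => by
        rw [norm_mul]
        exact mul_le_mul_of_nonneg_left (hCd (z - t)) (norm_nonneg _))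
      (hG.norm.mul_const Cd)
      (Eventually.of_forall fun t => fun z _ => (htransDiff t z).const_mul (G t))
    exact key.2
  -- rewrite the integrand as an inner integral
  have key : ∀ x : ℝ, ((∫ y : ℝ, G (x - y) * m y) * deriv (fun z => m z) x
      + 2 * deriv (fun z => ∫ y : ℝ, G (z - y) * m y) x * m x)
      = ∫ t : ℝ, G t * (m (x - t) * dm x + 2 * (dm (x - t) * m x)) := by
    intro x
    have hd2 : deriv (fun z => ∫ y : ℝ, G (z - y) * m y) x = ∫ t : ℝ, G t * dm (x - t) := by
      rw [hufun]; exact (hderivAt x).deriv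
    have hd1 : deriv (fun z => m z) x = dm x := rfl
    rw [hd1, hd2, hu x]
    have e1 : (fun t => G t * (m (x - t) * dm x + 2 * (dm (x - t) * m x)))
        = fun t => (G t * m (x - t)) * dm x + 2 * ((G t * dm (x - t)) * m x) := by
      funext t; ring
    rw [e1, integral_add (((qm x).mul_const (dm x)))
      ((((qd x).mul_const (m x))).const_mul 2), integral_mul_const,
      integral_const_mul, integral_mul_const]
    ring
  rw [integral_congr_ae (Eventually.of_forall key)]
  -- swap the order of integration
  have hprod : Integrable (Function.uncurry fun x t =>
      G t * (m (x - t) * dm x + 2 * (dm (x - t) * m x))) (volume.prod volume) := by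
    have hbound : Integrable (fun z : ℝ × ℝ =>
        (Cm * ‖dm z.1‖ + 2 * Cd * ‖m z.1‖) * ‖G z.2‖) (volume.prod volume) :=
      Integrable.mul_prod ((hdmInt.norm.const_mul Cm).add
        ((hmInt.norm.const_mul (2 * Cd)))) hG.norm
    refine hbound.mono' ?_ ?_
    · exact (hG.aestronglyMeasurable.comp_quasiMeasurePreserving Measure.quasiMeasurePreserving_snd).mul
        (((m.continuous.comp (continuous_fst.sub continuous_snd)).mul
          (hdm_cont.comp continuous_fst)).add
         ((continuous_const.mul ((hdm_cont.comp (continuous_fst.sub continuous_snd)).mul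
          (m.continuous.comp continuous_fst))))).aestronglyMeasurable
    · filter_upwards with z
      have h1 : ‖m (z.1 - z.2) * dm z.1 + 2 * (dm (z.1 - z.2) * m z.1)‖
          ≤ Cm * ‖dm z.1‖ + 2 * Cd * ‖m z.1‖ := by
        calc ‖m (z.1 - z.2) * dm z.1 + 2 * (dm (z.1 - z.2) * m z.1)‖
            ≤ ‖m (z.1 - z.2) * dm z.1‖ + ‖2 * (dm (z.1 - z.2) * m z.1)‖ := norm_add_le _ _
          _ ≤ Cm * ‖dm z.1‖ + 2 * Cd * ‖m z.1‖ := by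
              rw [norm_mul, norm_mul, norm_mul]
              have hb1 := mul_le_mul_of_nonneg_right (hCm (z.1 - z.2)) (norm_nonneg (dm z.1))
              have hb2 := mul_le_mul_of_nonneg_right (hCd (z.1 - z.2)) (norm_nonneg (m z.1))
              have h2n : ‖(2:ℝ)‖ = 2 := by norm_num
              rw [h2n]
              linarith
      calc ‖Function.uncurry (fun x t => G t * (m (x - t) * dm x + 2 * (dm (x - t) * m x))) z‖
          = ‖G z.2‖ * ‖m (z.1 - z.2) * dm z.1 + 2 * (dm (z.1 - z.2) * m z.1)‖ := by
            simp [Function.uncurry, norm_mul]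
        _ ≤ ‖G z.2‖ * (Cm * ‖dm z.1‖ + 2 * Cd * ‖m z.1‖) :=
            mul_le_mul_of_nonneg_left h1 (norm_nonneg _)
        _ = (Cm * ‖dm z.1‖ + 2 * Cd * ‖m z.1‖) * ‖G z.2‖ := mul_comm _ _
  rw [integral_integral_swap hprod]
  -- integration by parts in the inner integral
  have ibp : ∀ t : ℝ, (∫ x : ℝ, m (x - t) * dm x) = - ∫ x : ℝ, dm (x - t) * m x := by
    intro t
    exact integral_mul_deriv_eq_deriv_mul_of_integrable
      (u := fun x => m (x - t)) (u' := fun x => dm (x - t)) (v := ⇑m) (v' := dm)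
      (fun x _ => htransDiff t x) (fun x _ => hmDiff x) (p1 t) (p2 t) (p3 t)
  have inner_eq : ∀ t : ℝ,
      (∫ x : ℝ, G t * (m (x - t) * dm x + 2 * (dm (x - t) * m x)))
      = G t * (- ∫ x : ℝ, m (x - t) * dm x) := by
    intro t
    rw [integral_const_mul]
    congr 1
    rw [integral_add (p1 t) ((p2 t).const_mul 2), integral_const_mul]
    have h2 : (∫ x : ℝ, dm (x - t) * m x) = - ∫ x : ℝ, m (x - t) * dm x := by
      rw [ibp t, neg_neg]
    rw [h2]; ring
  rw [integral_congr_ae (Eventually.of_forall inner_eq)]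
  -- oddness of t ↦ ∫ m(x-t) dm x
  set A : ℝ → ℝ := fun t => ∫ x : ℝ, m (x - t) * dm x with hA
  have hAodd : ∀ t : ℝ, A (-t) = - A t := by
    intro t
    have e1 : A (-t) = ∫ x : ℝ, m (x + t) * dm x := by
      simp only [hA, sub_neg_eq_add]
    have e2 : (∫ x : ℝ, m (x + t) * dm x) = ∫ y : ℝ, m y * dm (y - t) := by
      have h := integral_add_right_eq_self (μ := volume) (fun y => m y * dm (y - t)) t
      simpa using h
    have e3 : (∫ y : ℝ, m y * dm (y - t)) = - ∫ y : ℝ, dm y * m (y - t) :=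
      integral_mul_deriv_eq_deriv_mul_of_integrable
        (u := ⇑m) (u' := dm) (v := fun y => m (y - t)) (v' := fun y => dm (y - t))
        (fun x _ => hmDiff x) (fun x _ => htransDiff t x) (p1' t)
        ((p1 t).congr (Eventually.of_forall fun x => by simp only [Pi.mul_apply]; ring))
        ((p3 t).congr (Eventually.of_forall fun x => by simp only [Pi.mul_apply]; ring))
    have e4 : (∫ y : ℝ, dm y * m (y - t)) = ∫ y : ℝ, m (y - t) * dm y := by
      simp_rw [mul_comm]
    rw [e1, e2, e3, e4]
  -- conclude by oddness
  have hodd : ∀ t : ℝ, G (-t) * (- A (-t)) = - (G t * (- A t)) := by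
    intro t
    rw [hGeven, hAodd]; ring
  have h := integral_neg_eq_self (fun t => G t * (- A t)) volume
  have h2 : (∫ t : ℝ, G (-t) * (- A (-t))) = ∫ t : ℝ, -(G t * (- A t)) :=
    integral_congr_ae (Eventually.of_forall fun t => hodd t)
  rw [h2, integral_neg] at h
  linarith [h]
end

section
/- Let T > 0, let u : ℝ × ℝ → ℝ be continuous with continuous spatial derivative ∂ₓu, and let m : ℝ × ℝ → ℝ be differentiable and satisfy ∂ₜm + u ∂ₓm + 2 (∂ₓu) m = 0 on [0,T) × ℝ. Fix ξ ∈ ℝ and let q : [0,T) → ℝ be differentiable with q(0) = ξ and q′(t) = u(t, q(t)). Then for every t ∈ [0,T): m(t, q(t)) ≥ 0 if and only if m(0, ξ) ≥ 0, and m(t, q(t)) ≤ 0 if and only if m(0, ξ) ≤ 0; in particular the sign of m is preserved along characteristics. -/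
open MeasureTheory

/-- The sign of the momentum `m` is preserved along characteristics of the transport
equation `∂ₜm + u ∂ₓm + 2 ∂ₓu m = 0`: for every `t ∈ [0,T)`, `m(t, q(t)) ≥ 0` iff
`m(0, ξ) ≥ 0`, and `m(t, q(t)) ≤ 0` iff `m(0, ξ) ≤ 0`. -/
theorem sign_preserved_along_characteristic (T : ℝ) (hT : 0 < T)
    (u m : ℝ → ℝ → ℝ)
    (hu : Continuous fun p : ℝ × ℝ => u p.1 p.2)
    (hux : Continuous fun p : ℝ × ℝ => deriv (u p.1) p.2)
    (hm : Differentiable ℝ fun p : ℝ × ℝ => m p.1 p.2)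
    (heq : ∀ t ∈ Set.Ico (0 : ℝ) T, ∀ x : ℝ,
      deriv (fun s => m s x) t + u t x * deriv (m t) x + 2 * deriv (u t) x * m t x = 0)
    (ξ : ℝ) (q : ℝ → ℝ) (hq0 : q 0 = ξ)
    (hq : ∀ t ∈ Set.Ico (0 : ℝ) T, HasDerivAt q (u t (q t)) t) :
    ∀ t ∈ Set.Ico (0 : ℝ) T,
      (0 ≤ m t (q t) ↔ 0 ≤ m 0 ξ) ∧ (m t (q t) ≤ 0 ↔ m 0 ξ ≤ 0) := by
  set F : ℝ × ℝ → ℝ := fun p => m p.1 p.2 with hF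
  set f : ℝ → ℝ := fun s => m s (q s) with hfdef
  set g : ℝ → ℝ := fun s => 2 * deriv (u s) (q s) with hgdef
  -- derivative of f along characteristic
  have hderiv : ∀ s ∈ Set.Ico (0 : ℝ) T, HasDerivAt f (-(g s * f s)) s := by
    intro s hs
    have hFd : HasFDerivAt F (fderiv ℝ F (s, q s)) (s, q s) := (hm (s, q s)).hasFDerivAt
    set L := fderiv ℝ F (s, q s) with hL
    have hc : HasDerivAt (fun r => (r, q r)) ((1 : ℝ), u s (q s)) s :=
      (hasDerivAt_id s).prodMk (hq s hs)
    have h1 : HasDerivAt f (L (1, u s (q s))) s := by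
      have := hFd.comp_hasDerivAt s hc
      exact this
    -- partial derivatives
    have h2 : HasDerivAt (fun r => m r (q s)) (L (1, 0)) s := by
      have := hFd.comp_hasDerivAt s
        ((hasDerivAt_id s).prodMk (hasDerivAt_const s (q s)))
      exact this
    have h3 : HasDerivAt (fun x => m s x) (L (0, 1)) (q s) := by
      have := hFd.comp_hasDerivAt (q s)
        ((hasDerivAt_const (q s) s).prodMk (hasDerivAt_id (q s)))
      exact this
    have hd2 : deriv (fun r => m r (q s)) s = L (1, 0) := h2.deriv
    have hd3 : deriv (m s) (q s) = L (0, 1) := h3.deriv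
    have hlin : L (1, u s (q s)) = L (1, 0) + u s (q s) * L (0, 1) := by
      have he : ((1 : ℝ), u s (q s)) = (1, 0) + u s (q s) • ((0 : ℝ), (1 : ℝ)) := by
        simp [Prod.ext_iff]
      rw [he, L.map_add, L.map_smul, smul_eq_mul]
    have hkey := heq s hs (q s)
    rw [hd2, hd3] at hkey
    have : L (1, u s (q s)) = -(g s * f s) := by
      rw [hlin, hgdef, hfdef]; simp only []; linarith
    rw [this] at h1
    exact h1
  intro t ht
  obtain ⟨ht0, htT⟩ := ht
  have hsub : Set.Icc (0 : ℝ) t ⊆ Set.Ico (0 : ℝ) T := fun s hs =>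
    ⟨hs.1, lt_of_le_of_lt hs.2 htT⟩
  -- g is continuous on [0, t]
  have hgc : ContinuousOn g (Set.Icc (0 : ℝ) t) := by
    intro s hs
    have hsI := hsub hs
    have hqc : ContinuousAt q s := (hq s hsI).continuousAt
    have : ContinuousAt (fun r => deriv (u r) (q r)) s :=
      hux.continuousAt.comp (continuousAt_id.prodMk hqc)
    exact (continuousAt_const.mul this).continuousWithinAt
  -- Tietze extension of g from [0, t]
  obtain ⟨gt, hgt⟩ := ContinuousMap.exists_restrict_eq (Y := ℝ) isClosed_Icc
    ⟨_, hgc.restrict⟩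
  have hagree : ∀ s ∈ Set.Icc (0 : ℝ) t, gt s = g s := fun s hs =>
    ContinuousMap.congr_fun hgt ⟨s, hs⟩
  set G : ℝ → ℝ := fun s => ∫ r in (0 : ℝ)..s, gt r with hGdef
  have hG : ∀ s : ℝ, HasDerivAt G (gt s) s := fun s =>
    (gt.continuous.integral_hasStrictDerivAt 0 s).hasDerivAt
  set H : ℝ → ℝ := fun s => f s * Real.exp (G s) with hHdef
  have hH : ∀ s ∈ Set.Icc (0 : ℝ) t, HasDerivAt H 0 s := by
    intro s hs
    have h1 := (hderiv s (hsub hs)).mul ((hG s).exp)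
    have h2 : gt s = g s := hagree s hs
    have : -(g s * f s) * Real.exp (G s) + f s * (Real.exp (G s) * gt s) = 0 := by
      rw [h2]; ring
    rwa [this] at h1
  have hHc : ContinuousOn H (Set.Icc (0 : ℝ) t) := fun s hs =>
    (hH s hs).continuousAt.continuousWithinAt
  have hconst : H t = H 0 :=
    constant_of_has_deriv_right_zero hHc
      (fun s hs => (hH s (Set.Ico_subset_Icc_self hs)).hasDerivWithinAt) t
      (Set.right_mem_Icc.2 ht0)
  have hG0 : G 0 = 0 := intervalIntegral.integral_same
  have hH0 : H 0 = m 0 ξ := by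
    simp [hHdef, hG0, hfdef, hq0]
  have key : m t (q t) * Real.exp (G t) = m 0 ξ := by
    rw [← hH0, ← hconst]
  have hE : (0 : ℝ) < Real.exp (G t) := Real.exp_pos _
  constructor
  · rw [← key]
    exact (mul_nonneg_iff_of_pos_right hE).symm
  · constructor
    · intro h
      nlinarith [mul_nonneg (neg_nonneg.2 h) hE.le]
    · intro h
      by_contra hc
      push_neg at hc
      nlinarith [mul_pos hc hE]
end

section
/- Let T > 0, let u : ℝ × ℝ → ℝ be continuous with continuous spatial derivative ∂ₓu, and let m : ℝ × ℝ → ℝ be differentiable and satisfy ∂ₜm + u ∂ₓm + 2 (∂ₓu) m = 0 on [0,T) × ℝ. Assume that for every ξ ∈ ℝ there is a differentiable characteristic q(·, ξ) : [0,T) → ℝ with q(0, ξ) = ξ and ∂ₜq(t, ξ) = u(t, q(t, ξ)), and that for each t ∈ [0,T) the flow map ξ ↦ q(t, ξ) is surjective onto ℝ. If m(0, x) ≥ 0 for all x ∈ ℝ, then m(t, x) ≥ 0 for all (t, x) ∈ [0,T) × ℝ; likewise, if m(0, x) ≤ 0 for all x, then m(t, x) ≤ 0 for all (t, x). -/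
open MeasureTheory

/-- If the flow of characteristics of the transport equation
`∂ₜm + u ∂ₓm + 2 ∂ₓu m = 0` is surjective at each time, then a sign of the initial
momentum is preserved: `m(0,·) ≥ 0` implies `m(t,·) ≥ 0` for all `t ∈ [0,T)`, and
likewise for `≤ 0`. -/
theorem sign_preservation_of_momentum (T : ℝ) (hT : 0 < T)
    (u m : ℝ → ℝ → ℝ)
    (hu : Continuous fun p : ℝ × ℝ => u p.1 p.2)
    (hux : Continuous fun p : ℝ × ℝ => deriv (u p.1) p.2)
    (hm : Differentiable ℝ fun p : ℝ × ℝ => m p.1 p.2)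
    (heq : ∀ t ∈ Set.Ico (0 : ℝ) T, ∀ x : ℝ,
      deriv (fun s => m s x) t + u t x * deriv (m t) x + 2 * deriv (u t) x * m t x = 0)
    (q : ℝ → ℝ → ℝ)
    (hq0 : ∀ ξ : ℝ, q 0 ξ = ξ)
    (hq : ∀ ξ : ℝ, ∀ t ∈ Set.Ico (0 : ℝ) T,
      HasDerivAt (fun s => q s ξ) (u t (q t ξ)) t)
    (hsurj : ∀ t ∈ Set.Ico (0 : ℝ) T, Function.Surjective (q t)) :
    ((∀ x : ℝ, 0 ≤ m 0 x) → ∀ t ∈ Set.Ico (0 : ℝ) T, ∀ x : ℝ, 0 ≤ m t x) ∧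
    ((∀ x : ℝ, m 0 x ≤ 0) → ∀ t ∈ Set.Ico (0 : ℝ) T, ∀ x : ℝ, m t x ≤ 0) := by
  have key : ∀ ξ : ℝ, ∀ t₀ ∈ Set.Ico (0 : ℝ) T,
      ∃ c : ℝ, 0 < c ∧ m t₀ (q t₀ ξ) = c * m 0 ξ := by
    intro ξ t₀ ht₀
    obtain ⟨ht₀0, ht₀T⟩ := ht₀
    set F : ℝ × ℝ → ℝ := fun p => m p.1 p.2 with hF
    -- projection onto [0, t₀]
    set p : ℝ → ℝ := fun t => max 0 (min t₀ t) with hpdef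
    have hpc : Continuous p := continuous_const.max (continuous_const.min continuous_id)
    have hpmem : ∀ t, p t ∈ Set.Icc (0 : ℝ) t₀ :=
      fun t => ⟨le_max_left _ _, max_le ht₀0 (min_le_left _ _)⟩
    have hpid : ∀ t ∈ Set.Icc (0 : ℝ) t₀, p t = t := by
      intro t ht
      simp only [hpdef]
      rw [min_eq_right ht.2, max_eq_right ht.1]
    have hIcc : Set.Icc (0 : ℝ) t₀ ⊆ Set.Ico (0 : ℝ) T :=
      fun s hs => ⟨hs.1, lt_of_le_of_lt hs.2 ht₀T⟩
    have hqc : ∀ s ∈ Set.Icc (0 : ℝ) t₀, ContinuousAt (fun r => q r ξ) s :=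
      fun s hs => (hq ξ s (hIcc hs)).continuousAt
    -- the (extended) coefficient 2 uₓ along the characteristic
    set g : ℝ → ℝ := fun t => 2 * deriv (u (p t)) (q (p t) ξ) with hgdef
    have hgc : Continuous g := by
      have h1 : Continuous fun t => q (p t) ξ := by
        rw [continuous_iff_continuousAt]
        intro t
        exact (hqc (p t) (hpmem t)).comp hpc.continuousAt
      exact continuous_const.mul (hux.comp (hpc.prodMk h1))
    set G : ℝ → ℝ := fun t => ∫ s in (0:ℝ)..t, g s with hGdef
    have hG : ∀ t, HasDerivAt G (g t) t :=
      fun t => (hgc.integral_hasStrictDerivAt 0 t).hasDerivAt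
    set h : ℝ → ℝ := fun t => m t (q t ξ) * Real.exp (G t) with hhdef
    have hh' : ∀ t ∈ Set.Icc (0 : ℝ) t₀, HasDerivAt h 0 t := by
      intro t ht
      have htT : t ∈ Set.Ico (0 : ℝ) T := hIcc ht
      have hFd : HasFDerivAt F (fderiv ℝ F (t, q t ξ)) (t, q t ξ) :=
        (hm (t, q t ξ)).hasFDerivAt
      have hcurve : HasDerivAt (fun s => (s, q s ξ)) ((1 : ℝ), u t (q t ξ)) t :=
        (hasDerivAt_id t).prodMk (hq ξ t htT)
      have hf : HasDerivAt (fun s => m s (q s ξ))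
          (fderiv ℝ F (t, q t ξ) (1, u t (q t ξ))) t :=
        hFd.comp_hasDerivAt (f := fun s => (s, q s ξ)) t hcurve
      have hdt : deriv (fun s => m s (q t ξ)) t = fderiv ℝ F (t, q t ξ) (1, 0) := by
        have : HasDerivAt (fun s => m s (q t ξ)) (fderiv ℝ F (t, q t ξ) (1, 0)) t :=
          hFd.comp_hasDerivAt (f := fun s => (s, q t ξ)) t ((hasDerivAt_id t).prodMk (hasDerivAt_const t (q t ξ)))
        exact this.deriv
      have hdx : deriv (m t) (q t ξ) = fderiv ℝ F (t, q t ξ) (0, 1) := by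
        have : HasDerivAt (fun y => m t y) (fderiv ℝ F (t, q t ξ) (0, 1)) (q t ξ) :=
          hFd.comp_hasDerivAt (f := fun y => (t, y)) (q t ξ)
            ((hasDerivAt_const (q t ξ) t).prodMk (hasDerivAt_id (q t ξ)))
        exact this.deriv
      have hlin : fderiv ℝ F (t, q t ξ) (1, u t (q t ξ)) =
          fderiv ℝ F (t, q t ξ) (1, 0) + u t (q t ξ) * fderiv ℝ F (t, q t ξ) (0, 1) := by
        have hsplit : ((1 : ℝ), u t (q t ξ)) = (1, 0) + u t (q t ξ) • ((0 : ℝ), (1 : ℝ)) := by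
          simp [Prod.ext_iff]
        rw [hsplit, map_add, (fderiv ℝ F (t, q t ξ)).map_smul, smul_eq_mul]
      have hpde := heq t htT (q t ξ)
      have hf' : HasDerivAt (fun s => m s (q s ξ))
          (-(2 * deriv (u t) (q t ξ) * m t (q t ξ))) t := by
        have : fderiv ℝ F (t, q t ξ) (1, u t (q t ξ)) =
            -(2 * deriv (u t) (q t ξ) * m t (q t ξ)) := by
          rw [hlin, ← hdt, ← hdx]; linarith
        rwa [this] at hf
      have hgt : g t = 2 * deriv (u t) (q t ξ) := by
        simp only [hgdef]
        rw [hpid t ht]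
      have hexp : HasDerivAt (fun s => Real.exp (G s)) (Real.exp (G t) * g t) t :=
        (hG t).exp
      have := hf'.mul hexp
      convert this using 1
      · rfl
      · rfl
      · rfl
      · rw [hgt]; ring
    have hcont : ContinuousOn h (Set.Icc 0 t₀) :=
      fun s hs => (hh' s hs).continuousAt.continuousWithinAt
    have hconst := constant_of_has_deriv_right_zero hcont
      (fun s hs => ((hh' s ⟨hs.1, hs.2.le⟩).hasDerivWithinAt))
    have h1 : h t₀ = h 0 := hconst t₀ (Set.right_mem_Icc.2 ht₀0)
    have hG0 : G 0 = 0 := intervalIntegral.integral_same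
    have h2 : m t₀ (q t₀ ξ) * Real.exp (G t₀) = m 0 ξ := by
      have := h1
      simp only [hhdef, hG0, Real.exp_zero, mul_one, hq0] at this
      exact this
    refine ⟨Real.exp (-(G t₀)), Real.exp_pos _, ?_⟩
    rw [Real.exp_neg]
    field_simp
    linarith [h2]
  constructor
  · intro h0 t ht x
    obtain ⟨ξ, rfl⟩ := hsurj t ht x
    obtain ⟨c, hc, he⟩ := key ξ t ht
    rw [he]
    exact mul_nonneg hc.le (h0 ξ)
  · intro h0 t ht x
    obtain ⟨ξ, rfl⟩ := hsurj t ht x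
    obtain ⟨c, hc, he⟩ := key ξ t ht
    rw [he]
    exact mul_nonpos_of_nonneg_of_nonpos hc.le (h0 ξ)
end

section
/- Let T > 0, let G ∈ L¹(ℝ) be even, and let m : [0,T) × ℝ → ℝ be such that for each t ∈ [0,T) the function m(t,·) is Schwartz, m is differentiable in t, and m satisfies ∂ₜm(t,x) + u(t,x) ∂ₓm(t,x) + 2 ∂ₓu(t,x) m(t,x) = 0 where u(t,·) = G * m(t,·). Assume moreover the differentiation-under-the-integral hypothesis: the function I(t) = ∫_ℝ m(t,x) dx is differentiable with I′(t) = ∫_ℝ ∂ₜm(t,x) dx. Then I(t) = I(0) for all t ∈ [0,T); in particular, if additionally m(t,x) ≥ 0 for all (t,x), then the L¹ norm ‖m(t,·)‖_{L¹} is constant in t. -/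
open MeasureTheory Filter Set

section MomentumAux



lemma ftc_zero {F F' : ℝ → ℝ} (hd : ∀ x, HasDerivAt F (F' x) x)
    (hint : Integrable F') (htop : Tendsto F atTop (nhds 0))
    (hbot : Tendsto F atBot (nhds 0)) : ∫ x, F' x = 0 := by
  have h1 : ∫ x in Ioi (0:ℝ), F' x = 0 - F 0 :=
    integral_Ioi_of_hasDerivAt_of_tendsto' (fun x _ => hd x) hint.integrableOn htop
  have h2 : ∫ x in Iic (0:ℝ), F' x = F 0 - 0 :=
    integral_Iic_of_hasDerivAt_of_tendsto' (fun x _ => hd x) hint.integrableOn hbot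
  rw [← intervalIntegral.integral_Iic_add_Ioi hint.integrableOn hint.integrableOn, h1, h2]; ring

variable {G : ℝ → ℝ}

lemma sch_tendsto_top (g : SchwartzMap ℝ ℝ) : Tendsto g atTop (nhds 0) :=
  (zero_at_infty g).mono_left atTop_le_cocompact

lemma sch_tendsto_bot (g : SchwartzMap ℝ ℝ) : Tendsto g atBot (nhds 0) :=
  (zero_at_infty g).mono_left atBot_le_cocompact

lemma sch_bound (g : SchwartzMap ℝ ℝ) (x : ℝ) : ‖g x‖ ≤ SchwartzMap.seminorm ℝ 0 0 g :=
  SchwartzMap.norm_le_seminorm ℝ g x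

lemma conv_comm (G : ℝ → ℝ) (g : SchwartzMap ℝ ℝ) (x : ℝ) :
    (∫ y : ℝ, G (x - y) * g y) = ∫ y : ℝ, G y * g (x - y) := by
  rw [← integral_sub_left_eq_self (fun y => G y * g (x - y)) volume x]
  simp

lemma integrable_G_mul (hG : Integrable G) {φ : ℝ → ℝ} (hφ : Continuous φ)
    {C : ℝ} (hC : ∀ x, ‖φ x‖ ≤ C) : Integrable (fun y => G y * φ y) := by
  refine (hG.norm.mul_const C).mono' (hG.1.mul hφ.aestronglyMeasurable) ?_
  refine ae_of_all _ fun y => ?_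
  rw [norm_mul]
  exact mul_le_mul_of_nonneg_left (hC y) (norm_nonneg _)

lemma conv_integrable (hG : Integrable G) (g : SchwartzMap ℝ ℝ) (x : ℝ) :
    Integrable (fun y => G y * g (x - y)) :=
  integrable_G_mul hG (g.continuous.comp (continuous_const.sub continuous_id))
    (fun y => sch_bound g (x - y))

lemma conv_bound (hG : Integrable G) (g : SchwartzMap ℝ ℝ) (x : ℝ) :
    ‖∫ y : ℝ, G y * g (x - y)‖ ≤ (∫ y : ℝ, ‖G y‖) * SchwartzMap.seminorm ℝ 0 0 g := by
  calc ‖∫ y : ℝ, G y * g (x - y)‖ ≤ ∫ y : ℝ, ‖G y * g (x - y)‖ :=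
        norm_integral_le_integral_norm _
    _ ≤ ∫ y : ℝ, ‖G y‖ * SchwartzMap.seminorm ℝ 0 0 g := by
        refine integral_mono (conv_integrable hG g x).norm (hG.norm.mul_const _) fun y => ?_
        rw [norm_mul]
        exact mul_le_mul_of_nonneg_left (sch_bound g (x - y)) (norm_nonneg _)
    _ = (∫ y : ℝ, ‖G y‖) * SchwartzMap.seminorm ℝ 0 0 g := integral_mul_const _ _

lemma sch_hasDerivAt (g : SchwartzMap ℝ ℝ) (x : ℝ) :
    HasDerivAt g ((SchwartzMap.derivCLM ℝ ℝ g) x) x := by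
  rw [SchwartzMap.derivCLM_apply]
  exact g.differentiableAt.hasDerivAt

lemma conv_hasDerivAt (hG : Integrable G) (g : SchwartzMap ℝ ℝ) (x : ℝ) :
    HasDerivAt (fun z => ∫ y : ℝ, G y * g (z - y))
      (∫ y : ℝ, G y * (SchwartzMap.derivCLM ℝ ℝ g) (x - y)) x := by
  set g' : SchwartzMap ℝ ℝ := SchwartzMap.derivCLM ℝ ℝ g with hg'
  refine (hasDerivAt_integral_of_dominated_loc_of_deriv_le (F := fun z y => G y * g (z - y))
    (F' := fun z y => G y * g' (z - y)) (bound := fun y => ‖G y‖ * SchwartzMap.seminorm ℝ 0 0 g')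
    (s := Metric.ball x 1) (Metric.ball_mem_nhds x one_pos) ?_ (conv_integrable hG g x) ?_ ?_ ?_ ?_).2
  · exact Eventually.of_forall fun z => (conv_integrable hG g z).1
  · exact (conv_integrable hG g' x).1
  · refine ae_of_all _ fun y z _ => ?_
    rw [norm_mul]
    exact mul_le_mul_of_nonneg_left (sch_bound g' (z - y)) (norm_nonneg _)
  · exact hG.norm.mul_const _
  · refine ae_of_all _ fun y z _ => ?_
    have h1 : HasDerivAt (fun z : ℝ => z - y) 1 z := (hasDerivAt_id z).sub_const y
    have h2 := (sch_hasDerivAt g (z - y)).comp z h1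
    simpa [hg'] using h2.const_mul (G y)

lemma conv_continuous (hG : Integrable G) (g : SchwartzMap ℝ ℝ) :
    Continuous (fun x => ∫ y : ℝ, G y * g (x - y)) := by
  refine continuous_of_dominated (fun x => (conv_integrable hG g x).1) ?_
    (hG.norm.mul_const (SchwartzMap.seminorm ℝ 0 0 g)) ?_
  · exact fun x => ae_of_all _ fun y => by
      rw [norm_mul]
      exact mul_le_mul_of_nonneg_left (sch_bound g (x - y)) (norm_nonneg _)
  · exact ae_of_all _ fun y =>
      continuous_const.mul (g.continuous.comp (continuous_id.sub continuous_const))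



variable {G : ℝ → ℝ}

lemma prod_integrable (hG : Integrable G) (g h : SchwartzMap ℝ ℝ) :
    Integrable (fun p : ℝ × ℝ => G p.2 * g (p.1 - p.2) * h p.1)
      ((volume : Measure ℝ).prod volume) := by
  have hmeas : AEStronglyMeasurable (fun p : ℝ × ℝ => G p.2 * g (p.1 - p.2) * h p.1)
      ((volume : Measure ℝ).prod volume) := by
    refine (AEStronglyMeasurable.mul ?_ ?_).mul ?_
    · exact hG.1.comp_snd
    · exact (g.continuous.comp (continuous_fst.sub continuous_snd)).aestronglyMeasurable
    · exact (h.continuous.comp continuous_fst).aestronglyMeasurable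
  have hbint : Integrable (fun p : ℝ × ℝ =>
      (SchwartzMap.seminorm ℝ 0 0 g * ‖h p.1‖) * ‖G p.2‖)
      ((volume : Measure ℝ).prod volume) :=
    Integrable.mul_prod (h.integrable.norm.const_mul _) hG.norm
  refine hbint.mono' hmeas (ae_of_all _ fun p => ?_)
  have : ‖G p.2 * g (p.1 - p.2) * h p.1‖ = ‖g (p.1 - p.2)‖ * ‖h p.1‖ * ‖G p.2‖ := by
    simp [norm_mul]; ring
  rw [this]
  have h0 : (0:ℝ) ≤ ‖h p.1‖ * ‖G p.2‖ := by positivity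
  calc ‖g (p.1 - p.2)‖ * ‖h p.1‖ * ‖G p.2‖
      = ‖g (p.1 - p.2)‖ * (‖h p.1‖ * ‖G p.2‖) := by ring
    _ ≤ SchwartzMap.seminorm ℝ 0 0 g * (‖h p.1‖ * ‖G p.2‖) :=
        mul_le_mul_of_nonneg_right (sch_bound g _) h0
    _ = SchwartzMap.seminorm ℝ 0 0 g * ‖h p.1‖ * ‖G p.2‖ := by ring

lemma swap_eq (hG : Integrable G) (g h : SchwartzMap ℝ ℝ) :
    ∫ x : ℝ, (∫ y : ℝ, G y * g (x - y)) * h x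
      = ∫ y : ℝ, G y * ∫ x : ℝ, g (x - y) * h x := by
  have step1 : ∀ x : ℝ, (∫ y : ℝ, G y * g (x - y)) * h x
      = ∫ y : ℝ, G y * g (x - y) * h x := fun x => (integral_mul_const _ _).symm
  simp_rw [step1]
  rw [integral_integral_swap (prod_integrable hG g h)]
  congr 1
  ext y
  rw [← integral_const_mul]
  congr 1
  ext x
  ring

variable {G : ℝ → ℝ}

-- translate is still integrable & bounded; integrability of  x ↦ g(x-y) * h x
lemma trans_mul_integrable (g h : SchwartzMap ℝ ℝ) (y : ℝ) :
    Integrable (fun x => (g (x - y) : ℝ) * h x) :=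
  h.integrable.bdd_mul
    ((g.continuous.comp (continuous_id.sub continuous_const)).aestronglyMeasurable)
    (ae_of_all _ fun x => sch_bound g (x - y))

lemma hk_sum (f : SchwartzMap ℝ ℝ) (y : ℝ) :
    (∫ x : ℝ, ((SchwartzMap.derivCLM ℝ ℝ f) (x - y) : ℝ) * f x)
      + (∫ x : ℝ, (f (x - y) : ℝ) * (SchwartzMap.derivCLM ℝ ℝ f) x) = 0 := by
  set f' : SchwartzMap ℝ ℝ := SchwartzMap.derivCLM ℝ ℝ f with hf'
  have hd : ∀ x : ℝ, HasDerivAt (fun x => (f (x - y) : ℝ) * f x)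
      ((f' (x - y) : ℝ) * f x + (f (x - y) : ℝ) * f' x) x := by
    intro x
    have h1 : HasDerivAt (fun x : ℝ => (f (x - y) : ℝ)) (f' (x - y)) x := by
      have := (sch_hasDerivAt f (x - y)).comp x ((hasDerivAt_id x).sub_const y)
      simpa [hf', Function.comp_def] using this
    exact h1.mul (sch_hasDerivAt f x)
  have hint1 := trans_mul_integrable f' f y
  have hint2 := trans_mul_integrable f f' y
  have htot : Integrable (fun x => (f' (x - y) : ℝ) * f x + (f (x - y) : ℝ) * f' x) :=
    hint1.add hint2
  have hb : ∀ x : ℝ, ‖(f (x - y) : ℝ) * f x‖ ≤ SchwartzMap.seminorm ℝ 0 0 f * ‖(f x : ℝ)‖ :=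
    fun x => (le_of_eq (norm_mul _ _)).trans
        (mul_le_mul_of_nonneg_right (sch_bound f (x - y)) (norm_nonneg _))
  have htop : Tendsto (fun x => (f (x - y) : ℝ) * f x) atTop (nhds 0) := by
    have h2 := ((sch_tendsto_top f).norm).const_mul (SchwartzMap.seminorm ℝ 0 0 f)
    rw [norm_zero, mul_zero] at h2
    exact squeeze_zero_norm hb h2
  have hbot : Tendsto (fun x => (f (x - y) : ℝ) * f x) atBot (nhds 0) := by
    have h2 := ((sch_tendsto_bot f).norm).const_mul (SchwartzMap.seminorm ℝ 0 0 f)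
    rw [norm_zero, mul_zero] at h2
    exact squeeze_zero_norm hb h2
  have h0 := ftc_zero hd htot htop hbot
  rw [integral_add hint1 hint2] at h0
  exact h0

variable {G : ℝ → ℝ}

lemma key (hG : Integrable G) (hGeven : ∀ x : ℝ, G (-x) = G x) (f : SchwartzMap ℝ ℝ) :
    ∫ x : ℝ, ((∫ y : ℝ, G (x - y) * f y) * deriv (fun z => (f z : ℝ)) x
      + 2 * deriv (fun z => ∫ y : ℝ, G (z - y) * f y) x * f x) = 0 := by
  set f' : SchwartzMap ℝ ℝ := SchwartzMap.derivCLM ℝ ℝ f with hf'def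
  have hderiv_f : deriv (fun z => (f z : ℝ)) = fun x => (f' x : ℝ) := by
    funext x
    exact (SchwartzMap.derivCLM_apply ℝ f x).symm
  have hueq : (fun z => ∫ y : ℝ, G (z - y) * f y) = fun z => ∫ y : ℝ, G y * f (z - y) :=
    funext fun z => conv_comm G f z
  have hderiv_u : deriv (fun z => ∫ y : ℝ, G (z - y) * f y)
      = fun x => ∫ y : ℝ, G y * f' (x - y) := by
    funext x
    rw [hueq]
    exact (conv_hasDerivAt hG f x).deriv
  rw [hderiv_f, hderiv_u]
  simp_rw [conv_comm G f]
  -- abbreviations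
  set h : ℝ → ℝ := fun y => ∫ x : ℝ, (f' (x - y) : ℝ) * f x with hh
  set k : ℝ → ℝ := fun y => ∫ x : ℝ, (f (x - y) : ℝ) * f' x with hk
  -- integrability of the two summands
  have int1 : Integrable (fun x => (∫ y : ℝ, G y * f (x - y)) * f' x) :=
    f'.integrable.bdd_mul (conv_continuous hG f).aestronglyMeasurable
      (ae_of_all _ fun x => conv_bound hG f x)
  have int2 : Integrable (fun x => (∫ y : ℝ, G y * f' (x - y)) * f x) :=
    f.integrable.bdd_mul (conv_continuous hG f').aestronglyMeasurable
      (ae_of_all _ fun x => conv_bound hG f' x)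
  -- A and B
  have hA : (∫ x : ℝ, (∫ y : ℝ, G y * f' (x - y)) * f x) = ∫ y : ℝ, G y * h y :=
    swap_eq hG f' f
  have hB : (∫ x : ℝ, (∫ y : ℝ, G y * f (x - y)) * f' x) = ∫ y : ℝ, G y * k y :=
    swap_eq hG f f'
  -- k y = h (-y)
  have hkh : ∀ y : ℝ, k y = h (-y) := by
    intro y
    have step := integral_sub_right_eq_self (fun x => (f x : ℝ) * f' (x + y)) (μ := volume) y
    simp only [sub_add_cancel] at step
    have lhs : k y = ∫ x : ℝ, (f (x - y) : ℝ) * f' x := rfl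
    have rhs : h (-y) = ∫ x : ℝ, (f' (x + y) : ℝ) * f x := by
      simp only [hh, sub_neg_eq_add]
    rw [lhs, rhs, step]
    congr 1; ext x; ring
  -- h y = -k y
  have hhk : ∀ y : ℝ, k y = -h y := by
    intro y
    have := hk_sum f y
    have h1 : h y + k y = 0 := this
    linarith
  -- A = B via evenness
  have hAB : (∫ y : ℝ, G y * h y) = ∫ y : ℝ, G y * k y := by
    have := integral_neg_eq_self (fun y => G y * h y) (μ := volume)
    rw [← this]
    congr 1; ext y
    rw [hGeven, ← hkh]
  -- B = -A
  have hBA : (∫ y : ℝ, G y * k y) = -∫ y : ℝ, G y * h y := by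
    rw [← integral_neg]
    congr 1; ext y
    rw [hhk]; ring
  have hA0 : (∫ y : ℝ, G y * h y) = 0 := by
    rw [hAB] at hBA ⊢
    linarith
  have hB0 : (∫ y : ℝ, G y * k y) = 0 := by rw [← hAB]; exact hA0
  -- assemble
  have expand : ∀ x : ℝ, (∫ y : ℝ, G y * f (x - y)) * f' x
      + 2 * (∫ y : ℝ, G y * f' (x - y)) * f x
      = (∫ y : ℝ, G y * f (x - y)) * f' x
      + 2 * ((∫ y : ℝ, G y * f' (x - y)) * f x) := fun x => by ring
  simp_rw [expand]
  rw [integral_add int1 (int2.const_mul 2), integral_const_mul, hA, hB, hA0, hB0]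
  ring

end MomentumAux

/-- Conservation of `∫ m dx` (and of the `L¹` norm for nonnegative `m`) for the
transport equation `∂ₜm + u ∂ₓm + 2 ∂ₓu m = 0` with `u = G * m` and an even
integrable kernel `G`, granted differentiation under the integral sign. -/
theorem integral_momentum_conserved (T : ℝ) (hT : 0 < T)
    (G : ℝ → ℝ) (hG : Integrable G) (hGeven : ∀ x : ℝ, G (-x) = G x)
    (m : ℝ → SchwartzMap ℝ ℝ) (mt : ℝ → ℝ → ℝ)
    (hmt : ∀ t ∈ Set.Ico (0 : ℝ) T, ∀ x : ℝ,
      HasDerivAt (fun s => (m s x : ℝ)) (mt t x) t)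
    (heq : ∀ t ∈ Set.Ico (0 : ℝ) T, ∀ x : ℝ,
      mt t x + (∫ y : ℝ, G (x - y) * m t y) * deriv (fun z => (m t z : ℝ)) x
        + 2 * deriv (fun z => ∫ y : ℝ, G (z - y) * m t y) x * m t x = 0)
    (hI : ∀ t ∈ Set.Ico (0 : ℝ) T,
      HasDerivAt (fun s => ∫ x : ℝ, (m s x : ℝ)) (∫ x : ℝ, mt t x) t) :
    (∀ t ∈ Set.Ico (0 : ℝ) T, ∫ x : ℝ, (m t x : ℝ) = ∫ x : ℝ, (m 0 x : ℝ)) ∧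
    ((∀ t ∈ Set.Ico (0 : ℝ) T, ∀ x : ℝ, 0 ≤ m t x) →
      ∀ t ∈ Set.Ico (0 : ℝ) T, ∫ x : ℝ, |(m t x : ℝ)| = ∫ x : ℝ, |(m 0 x : ℝ)|) := by
  have key0 : ∀ t ∈ Set.Ico (0 : ℝ) T, (∫ x : ℝ, mt t x) = 0 := by
    intro t ht
    have h1 : ∀ x : ℝ, mt t x
        = -((∫ y : ℝ, G (x - y) * m t y) * deriv (fun z => (m t z : ℝ)) x
          + 2 * deriv (fun z => ∫ y : ℝ, G (z - y) * m t y) x * m t x) := by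
      intro x
      have := heq t ht x
      linarith
    calc (∫ x : ℝ, mt t x)
        = ∫ x : ℝ, -((∫ y : ℝ, G (x - y) * m t y) * deriv (fun z => (m t z : ℝ)) x
          + 2 * deriv (fun z => ∫ y : ℝ, G (z - y) * m t y) x * m t x) := by
          exact integral_congr_ae (ae_of_all _ h1)
      _ = -∫ x : ℝ, ((∫ y : ℝ, G (x - y) * m t y) * deriv (fun z => (m t z : ℝ)) x
          + 2 * deriv (fun z => ∫ y : ℝ, G (z - y) * m t y) x * m t x) := integral_neg _
      _ = 0 := by rw [key hG hGeven (m t), neg_zero]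
  have hconst : ∀ t ∈ Set.Ico (0 : ℝ) T, (∫ x : ℝ, (m t x : ℝ)) = ∫ x : ℝ, (m 0 x : ℝ) := by
    intro t ht
    obtain ⟨ht0, htT⟩ := ht
    refine constant_of_has_deriv_right_zero (f := fun s => ∫ x : ℝ, (m s x : ℝ))
      (a := 0) (b := t) ?_ ?_ t (right_mem_Icc.mpr ht0)
    · intro s hs
      have hsT : s ∈ Set.Ico (0 : ℝ) T := ⟨hs.1, lt_of_le_of_lt hs.2 htT⟩
      exact (hI s hsT).continuousAt.continuousWithinAt
    · intro s hs
      have hsT : s ∈ Set.Ico (0 : ℝ) T := ⟨hs.1, hs.2.trans htT⟩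
      have := hI s hsT
      rw [key0 s hsT] at this
      exact this.hasDerivWithinAt
  refine ⟨hconst, fun hpos t ht => ?_⟩
  have ht0 : (0 : ℝ) ∈ Set.Ico (0 : ℝ) T := ⟨le_refl _, hT⟩
  calc (∫ x : ℝ, |(m t x : ℝ)|)
      = ∫ x : ℝ, (m t x : ℝ) :=
        integral_congr_ae (ae_of_all _ fun x => abs_of_nonneg (hpos t ht x))
    _ = ∫ x : ℝ, (m 0 x : ℝ) := hconst t ht
    _ = ∫ x : ℝ, |(m 0 x : ℝ)| :=
        (integral_congr_ae (ae_of_all _ fun x => abs_of_nonneg (hpos 0 ht0 x))).symm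
end

section
/- Let a > 0 and let m be a Schwartz function on ℝ. Then the Fourier transform of u = G_a * m satisfies 𝔉u(ξ) = (1 + 4π²ξ²)^(−a) · 𝔉m(ξ) for all ξ ∈ ℝ; equivalently, (1 + 4π²ξ²)^a · 𝔉u(ξ) = 𝔉m(ξ), so that u = G_a * m inverts the fractional inertia operator m = (1 − ∂ₓ²)^a u on the Fourier side. -/
open MeasureTheory

open Real Set

noncomputable def Gint (a : ℝ) (s x : ℝ) : ℝ :=
  s ^ (a - 1) * Real.exp (-s) * (4 * Real.pi * s) ^ (-(1 / 2) : ℝ) *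
      Real.exp (-x ^ 2 / (4 * s))

lemma Gint_nonneg (a : ℝ) {s : ℝ} (hs : 0 ≤ s) (x : ℝ) : 0 ≤ Gint a s x := by
  unfold Gint; positivity

lemma gauss_int {s : ℝ} (hs : 0 < s) :
    ∫ x : ℝ, Real.exp (-x ^ 2 / (4 * s)) = Real.sqrt (4 * Real.pi * s) := by
  have h : ∀ x : ℝ, -x ^ 2 / (4 * s) = -(1/(4*s)) * x ^ 2 := by
    intro x; field_simp
  simp_rw [h]
  rw [integral_gaussian]
  congr 1
  field_simp

lemma gauss_slice_integrable {s : ℝ} (hs : 0 < s) (c : ℝ) :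
    Integrable (fun x : ℝ => c * Real.exp (-x ^ 2 / (4 * s))) := by
  have h : ∀ x : ℝ, -x ^ 2 / (4 * s) = -(1/(4*s)) * x ^ 2 := by
    intro x; field_simp
  simp_rw [h]
  exact (integrable_exp_neg_mul_sq (by positivity)).const_mul c

lemma Gint_meas (a : ℝ) : Measurable (fun p : ℝ × ℝ => Gint a p.1 p.2) := by
  unfold Gint
  fun_prop

lemma rpow_cancel {s : ℝ} (hs : 0 < s) :
    (4 * Real.pi * s) ^ (-(1 / 2) : ℝ) * Real.sqrt (4 * Real.pi * s) = 1 := by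
  have h4 : (0:ℝ) < 4 * Real.pi * s := by positivity
  rw [Real.sqrt_eq_rpow, ← Real.rpow_add h4]
  norm_num

lemma Gint_slice_int {a s : ℝ} (hs : 0 < s) :
    ∫ x : ℝ, Gint a s x = s ^ (a - 1) * Real.exp (-s) := by
  unfold Gint
  rw [integral_const_mul, gauss_int hs, mul_assoc, rpow_cancel hs, mul_one]

lemma Gint_integrable {a : ℝ} (ha : 0 < a) :
    Integrable (fun p : ℝ × ℝ => Gint a p.1 p.2)
      ((volume.restrict (Ioi 0)).prod volume) := by
  have hmeas : AEStronglyMeasurable (fun p : ℝ × ℝ => Gint a p.1 p.2)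
      ((volume.restrict (Ioi 0)).prod volume) :=
    (Gint_meas a).aestronglyMeasurable
  rw [integrable_prod_iff hmeas]
  constructor
  · filter_upwards [ae_restrict_mem measurableSet_Ioi] with s hs
    exact gauss_slice_integrable hs _
  · have h : (fun s => ∫ x : ℝ, ‖Gint a s x‖)
        =ᶠ[ae (volume.restrict (Ioi (0:ℝ)))] fun s => s ^ (a - 1) * Real.exp (-s) := by
      filter_upwards [ae_restrict_mem measurableSet_Ioi] with s hs
      have : ∀ x : ℝ, ‖Gint a s x‖ = Gint a s x := fun x =>
        Real.norm_of_nonneg (Gint_nonneg a hs.le x)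
      simp_rw [this]
      exact Gint_slice_int hs
    refine Integrable.congr ?_ h.symm
    exact (Real.GammaIntegral_convergent ha).congr
      (ae_of_all _ fun s => mul_comm _ _)

lemma Gkernel_eq (a : ℝ) (x : ℝ) :
    Gkernel a x = (1 / Real.Gamma a) * ∫ s in Ioi (0:ℝ), Gint a s x := rfl

lemma Gkernel_integrable {a : ℝ} (ha : 0 < a) : Integrable (Gkernel a) := by
  have : Gkernel a = fun x => (1 / Real.Gamma a) * ∫ s in Ioi (0:ℝ), Gint a s x := rfl
  rw [this]
  exact ((Gint_integrable ha).integral_prod_right).const_mul _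

open Complex in
lemma gauss_fourier {s : ℝ} (hs : 0 < s) (ξ : ℝ) :
    ∫ x : ℝ, Complex.exp (((-2 * Real.pi * x * ξ : ℝ) : ℂ) * I) *
        (Real.exp (-x ^ 2 / (4 * s)) : ℂ)
      = (Real.sqrt (4 * Real.pi * s) : ℂ) *
        (Real.exp (-(4 * Real.pi ^ 2 * ξ ^ 2 * s)) : ℂ) := by
  have hb : (0:ℝ) < 1 / (4 * s) := by positivity
  have h := fourierIntegral_gaussian (b := ((1 / (4 * s) : ℝ) : ℂ))
    (by simpa using hb) ((-2 * Real.pi * ξ : ℝ) : ℂ)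
  have hL : ∀ x : ℝ, Complex.exp (((-2 * Real.pi * x * ξ : ℝ) : ℂ) * I) *
        (Real.exp (-x ^ 2 / (4 * s)) : ℂ)
      = Complex.exp (I * ((-2 * Real.pi * ξ : ℝ) : ℂ) * (x : ℂ)) *
        Complex.exp (-((1 / (4 * s) : ℝ) : ℂ) * (x : ℂ) ^ 2) := by
    intro x
    rw [Complex.ofReal_exp]
    congr 2
    · push_cast; ring
    · push_cast
      field_simp
  simp_rw [hL]
  rw [h]
  have h1 : ((Real.pi : ℂ) / ((1 / (4 * s) : ℝ) : ℂ)) = ((4 * Real.pi * s : ℝ) : ℂ) := by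
    push_cast
    field_simp
  rw [h1]
  have h2 : ((4 * Real.pi * s : ℝ) : ℂ) ^ (1 / 2 : ℂ)
      = (Real.sqrt (4 * Real.pi * s) : ℂ) := by
    rw [Real.sqrt_eq_rpow, Complex.ofReal_cpow (by positivity)]
    norm_num
  rw [h2]
  congr 1
  rw [Complex.ofReal_exp]
  congr 1
  push_cast
  field_simp
  ring

open Complex in
lemma fourier_Gkernel {a : ℝ} (ha : 0 < a) (ξ : ℝ) :
    FourierTransform.fourier (fun x => ((Gkernel a x : ℝ) : ℂ)) ξ
      = (((1 + 4 * Real.pi ^ 2 * ξ ^ 2) ^ (-a) : ℝ) : ℂ) := by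
  set c : ℝ := 1 + 4 * Real.pi ^ 2 * ξ ^ 2 with hc
  have hcpos : 0 < c := by positivity
  set e : ℝ → ℂ := fun x => Complex.exp (((-2 * Real.pi * x * ξ : ℝ) : ℂ) * I) with he
  have hebound : ∀ x, ‖e x‖ = 1 := fun x => Complex.norm_exp_ofReal_mul_I _
  rw [Real.fourier_real_eq_integral_exp_smul]
  have hG : ∀ x : ℝ, ((Gkernel a x : ℝ) : ℂ)
      = (1 / Real.Gamma a : ℂ) * ∫ s in Ioi (0:ℝ), (Gint a s x : ℂ) := by
    intro x
    rw [Gkernel_eq, Complex.ofReal_mul]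
    congr 1
    · push_cast; ring
    · exact integral_ofReal.symm
  have step1 : ∀ x : ℝ, Complex.exp (((-2 * Real.pi * x * ξ : ℝ) : ℂ) * I) •
        ((Gkernel a x : ℝ) : ℂ)
      = (1 / Real.Gamma a : ℂ) * ∫ s in Ioi (0:ℝ), e x * (Gint a s x : ℂ) := by
    intro x
    rw [smul_eq_mul, hG x, mul_left_comm, ← integral_const_mul]
  simp_rw [step1]
  rw [integral_const_mul]
  -- swap the order of integration
  have hint : Integrable (fun p : ℝ × ℝ => e p.2 * (Gint a p.1 p.2 : ℂ))
      ((volume.restrict (Ioi 0)).prod volume) := by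
    have hm : AEStronglyMeasurable (fun p : ℝ × ℝ => e p.2 * (Gint a p.1 p.2 : ℂ))
        ((volume.restrict (Ioi 0)).prod volume) := by
      apply Measurable.aestronglyMeasurable
      apply Measurable.mul
      · exact Complex.measurable_exp.comp
          ((Complex.measurable_ofReal.comp (by fun_prop)).mul measurable_const)
      · exact Complex.measurable_ofReal.comp (Gint_meas a)
    refine Integrable.mono' (Gint_integrable ha).norm hm ?_
    filter_upwards with p
    rw [norm_mul, hebound p.2, one_mul, Complex.norm_real]
  have hswap : (∫ x : ℝ, ∫ s in Ioi (0:ℝ), e x * (Gint a s x : ℂ))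
      = ∫ s in Ioi (0:ℝ), ∫ x : ℝ, e x * (Gint a s x : ℂ) := by
    exact (integral_integral_swap hint).symm
  rw [hswap]
  -- inner integral
  have inner : ∀ s ∈ Ioi (0:ℝ), (∫ x : ℝ, e x * (Gint a s x : ℂ))
      = ((s ^ (a - 1) * Real.exp (-(c * s)) : ℝ) : ℂ) := by
    intro s hs
    have hs' : (0:ℝ) < s := hs
    have : ∀ x : ℝ, e x * (Gint a s x : ℂ)
        = ((s ^ (a - 1) * Real.exp (-s) * (4 * Real.pi * s) ^ (-(1 / 2) : ℝ) : ℝ) : ℂ) *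
          (e x * (Real.exp (-x ^ 2 / (4 * s)) : ℂ)) := by
      intro x
      unfold Gint
      push_cast
      ring
    simp_rw [this]
    rw [integral_const_mul, he]
    rw [gauss_fourier hs' ξ]
    rw [← Complex.ofReal_mul, ← Complex.ofReal_mul]
    congr 1
    have hkey : (4 * Real.pi * s) ^ (-(1/2) : ℝ) *
        (Real.sqrt (4 * Real.pi * s) * Real.exp (-(4 * Real.pi ^ 2 * ξ ^ 2 * s)))
        = Real.exp (-(4 * Real.pi ^ 2 * ξ ^ 2 * s)) := by
      rw [← mul_assoc, rpow_cancel hs', one_mul]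
    rw [mul_assoc (s ^ (a - 1) * Real.exp (-s)), hkey, mul_assoc, ← Real.exp_add]
    congr 1
    simp only [hc]; ring
  rw [setIntegral_congr_fun measurableSet_Ioi inner]
  rw [show (∫ x in Ioi (0:ℝ), ((x ^ (a - 1) * Real.exp (-(c * x)) : ℝ) : ℂ))
      = ((∫ x in Ioi (0:ℝ), x ^ (a - 1) * Real.exp (-(c * x)) : ℝ) : ℂ) from integral_ofReal]
  rw [integral_rpow_mul_exp_neg_mul_Ioi ha hcpos]
  have hΓ : Real.Gamma a ≠ 0 := Real.Gamma_ne_zero (fun n h => by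
    have : (0:ℝ) ≤ (n : ℝ) := Nat.cast_nonneg n
    linarith)
  rw [show (1 / (Real.Gamma a : ℂ)) = ((1 / Real.Gamma a : ℝ) : ℂ) by push_cast; ring,
    ← Complex.ofReal_mul]
  congr 1
  rw [Real.rpow_neg hcpos.le, ← Real.inv_rpow hcpos.le, ← one_div]
  rw [one_div (Real.Gamma a), mul_comm ((1 / c) ^ a), ← mul_assoc,
    inv_mul_cancel₀ hΓ, one_mul]


set_option maxHeartbeats 2000000 in
open Complex in
/-- For `a > 0` and Schwartz `m`, the Fourier transform of `u = G_a * m` satisfies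
`𝔉u(ξ) = (1 + 4π²ξ²)^(-a) 𝔉m(ξ)`; equivalently `(1 + 4π²ξ²)^a 𝔉u(ξ) = 𝔉m(ξ)`,
so convolution with `G_a` inverts the fractional inertia operator on the Fourier
side. -/
theorem fourier_convolution_Gkernel (a : ℝ) (ha : 0 < a)
    (m : SchwartzMap ℝ ℝ) (ξ : ℝ) :
    FourierTransform.fourier (fun x => ((∫ y : ℝ, Gkernel a (x - y) * m y : ℝ) : ℂ)) ξ
        = (((1 + 4 * Real.pi ^ 2 * ξ ^ 2) ^ (-a) : ℝ) : ℂ) *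
          FourierTransform.fourier (fun x => ((m x : ℝ) : ℂ)) ξ ∧
    (((1 + 4 * Real.pi ^ 2 * ξ ^ 2) ^ a : ℝ) : ℂ) *
        FourierTransform.fourier (fun x => ((∫ y : ℝ, Gkernel a (x - y) * m y : ℝ) : ℂ)) ξ
      = FourierTransform.fourier (fun x => ((m x : ℝ) : ℂ)) ξ := by
  have hcpos : (0:ℝ) < 1 + 4 * Real.pi ^ 2 * ξ ^ 2 := by positivity
  set e : ℝ → ℂ := fun x => Complex.exp (((-2 * Real.pi * x * ξ : ℝ) : ℂ) * I) with he
  have hebound : ∀ x, ‖e x‖ = 1 := fun x => Complex.norm_exp_ofReal_mul_I _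
  have hGi : Integrable (Gkernel a) := Gkernel_integrable ha
  have hmi : Integrable (fun y : ℝ => m y) := m.integrable
  -- the key convolution integrand integrability
  have hK0 : Integrable (fun p : ℝ × ℝ => m p.2 * Gkernel a (p.1 - p.2))
      ((volume : Measure ℝ).prod volume) :=
    hmi.convolution_integrand (ContinuousLinearMap.mul ℝ ℝ) hGi
  set K : ℝ × ℝ → ℂ := fun p => e p.1 * ((Gkernel a (p.1 - p.2) * m p.2 : ℝ) : ℂ) with hKdef
  have hcomm : (fun p : ℝ × ℝ => ((Gkernel a (p.1 - p.2) * m p.2 : ℝ) : ℂ))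
      = fun p => ((m p.2 * Gkernel a (p.1 - p.2) : ℝ) : ℂ) := by
    funext p; rw [mul_comm]
  have hreal : Measurable (fun x : ℝ => -2 * Real.pi * x * ξ) := by fun_prop
  have he_meas : Measurable e := by
    rw [he]
    exact Complex.measurable_exp.comp
      ((Complex.measurable_ofReal.comp hreal).mul measurable_const)
  have hKm' : AEStronglyMeasurable
      (fun p : ℝ × ℝ => e p.1 * ((Gkernel a (p.1 - p.2) * m p.2 : ℝ) : ℂ))
      ((volume : Measure ℝ).prod volume) := by
    refine AEStronglyMeasurable.mul ?_ ?_
    · exact (he_meas.comp measurable_fst).aestronglyMeasurable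
    · rw [hcomm]
      exact Complex.continuous_ofReal.comp_aestronglyMeasurable hK0.aestronglyMeasurable
  have hKm : AEStronglyMeasurable K ((volume : Measure ℝ).prod volume) := hKm'
  have hK : Integrable K ((volume : Measure ℝ).prod volume) := by
    refine Integrable.mono' hK0.norm hKm ?_
    filter_upwards with p
    have hb : ‖K p‖ = ‖m p.2 * Gkernel a (p.1 - p.2)‖ := by
      simp only [hKdef, norm_mul, hebound, one_mul, Complex.norm_real, Real.norm_eq_abs,
        abs_mul]
      try ring
    exact hb.le
  -- Fourier of Gkernel as an integral
  have hFG : (∫ x : ℝ, e x * ((Gkernel a x : ℝ) : ℂ))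
      = (((1 + 4 * Real.pi ^ 2 * ξ ^ 2) ^ (-a) : ℝ) : ℂ) := by
    rw [← fourier_Gkernel ha ξ, Real.fourier_real_eq_integral_exp_smul]
    try simp_rw [smul_eq_mul, he]
    try simp_rw [smul_eq_mul]
  have main : FourierTransform.fourier
      (fun x => ((∫ y : ℝ, Gkernel a (x - y) * m y : ℝ) : ℂ)) ξ
      = (((1 + 4 * Real.pi ^ 2 * ξ ^ 2) ^ (-a) : ℝ) : ℂ) *
        FourierTransform.fourier (fun x => ((m x : ℝ) : ℂ)) ξ := by
    rw [Real.fourier_real_eq_integral_exp_smul]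
    have step1 : ∀ x : ℝ, Complex.exp (((-2 * Real.pi * x * ξ : ℝ) : ℂ) * I) •
          ((∫ y : ℝ, Gkernel a (x - y) * m y : ℝ) : ℂ)
        = ∫ y : ℝ, K (x, y) := by
      intro x
      rw [smul_eq_mul,
        show ((∫ y : ℝ, Gkernel a (x - y) * m y : ℝ) : ℂ)
          = ∫ y : ℝ, ((Gkernel a (x - y) * m y : ℝ) : ℂ) from integral_ofReal.symm,
        ← integral_const_mul]
    simp_rw [step1]
    rw [integral_integral_swap hK]
    have inner : ∀ y : ℝ, (∫ x : ℝ, K (x, y))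
        = (((1 + 4 * Real.pi ^ 2 * ξ ^ 2) ^ (-a) : ℝ) : ℂ) * (e y * ((m y : ℝ) : ℂ)) := by
      intro y
      have h1 : ∀ x : ℝ, K (x, y) = (e x * ((Gkernel a (x - y) : ℝ) : ℂ)) * ((m y : ℝ) : ℂ) := by
        intro x
        rw [hKdef]
        push_cast
        ring
      simp_rw [h1]
      rw [integral_mul_const]
      -- translation
      have h2 : (∫ x : ℝ, e x * ((Gkernel a (x - y) : ℝ) : ℂ))
          = ∫ x : ℝ, e (x + y) * ((Gkernel a x : ℝ) : ℂ) := by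
        rw [← integral_add_right_eq_self (fun x => e x * ((Gkernel a (x - y) : ℝ) : ℂ)) y]
        congr 1
        funext x
        rw [add_sub_cancel_right]
      have h3 : ∀ x : ℝ, e (x + y) = e y * e x := by
        intro x
        rw [he]
        simp only
        rw [← Complex.exp_add]
        congr 1
        push_cast
        ring
      have h4 : (∫ x : ℝ, e x * ((Gkernel a (x - y) : ℝ) : ℂ))
          = e y * (((1 + 4 * Real.pi ^ 2 * ξ ^ 2) ^ (-a) : ℝ) : ℂ) := by
        rw [h2]
        simp_rw [h3, mul_assoc (e y)]
        rw [integral_const_mul, hFG]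
      rw [h4]
      ring
    rw [show (∫ y : ℝ, ∫ x : ℝ, K (x, y)) = ∫ y : ℝ,
        (((1 + 4 * Real.pi ^ 2 * ξ ^ 2) ^ (-a) : ℝ) : ℂ) * (e y * ((m y : ℝ) : ℂ)) from
      integral_congr_ae (ae_of_all _ inner)]
    rw [integral_const_mul]
    congr 1
    rw [Real.fourier_real_eq_integral_exp_smul]
    try simp_rw [smul_eq_mul, he]
    try simp_rw [smul_eq_mul]
  refine ⟨main, ?_⟩
  rw [main, ← mul_assoc, ← Complex.ofReal_mul, ← Real.rpow_add hcpos]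
  norm_num
end
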